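/- arXiv:1312.5152 — 3 statements merged into one kernel-verified Lean document; each statement's English description precedes it below -/
import Mathlib

section
/- Let n ≥ 3 and 1 ≤ l < k ≤ n−1 be integers, and let λ ∈ ℝ^{n−1} satisfy σ_j(λ) ≥ 0 for all 1 ≤ j ≤ k. Then H_l(λ) ≥ H_k(λ)^{l/k} (note H_k(λ) ≥ 0, so the real power is well defined). Moreover, if in addition σ_j(λ) > 0 for all 1 ≤ j ≤ k and H_l(λ) = H_k(λ)^{l/k}, then λ = c·(1, …, 1) for some c > 0. -/
/-- The `k`-th elementary symmetric polynomial of `x ∈ ℝ^m`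
(`σ_0 = 1`, `σ_k = 0` for `k > m`). -/
noncomputable def esymmR (m : ℕ) (x : Fin m → ℝ) (k : ℕ) : ℝ :=
  ∑ s ∈ Finset.powersetCard k (Finset.univ : Finset (Fin m)), ∏ i ∈ s, x i

/-- The normalized `k`-th elementary symmetric function `H_k = σ_k / C(m,k)`
(`H_0 = 1`, `H_k = 0` for `k > m`). -/
noncomputable def Hnorm (m : ℕ) (x : Fin m → ℝ) (k : ℕ) : ℝ :=
  esymmR m x k / (m.choose k : ℝ)

/-- The point of `ℝ^{m-1}` obtained from `x ∈ ℝ^m` by deleting the `p`-th coordinate. -/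
def deleteCoord {m : ℕ} (x : Fin m → ℝ) (p : Fin m) : Fin (m - 1) → ℝ :=
  fun i => if (i : ℕ) < (p : ℕ) then x ⟨(i : ℕ), by have := i.isLt; omega⟩
           else x ⟨(i : ℕ) + 1, by have := i.isLt; omega⟩

open Polynomial

variable {m : ℕ} (x : Fin m → ℝ)

noncomputable def P (m : ℕ) (x : Fin m → ℝ) : ℝ[X] := ∏ i, (X + C (x i))

lemma monic_P : (P m x).Monic := monic_prod_of_monic _ _ (fun i _ => monic_X_add_C (x i))

lemma natDegree_P : (P m x).natDegree = m := by
  rw [P, natDegree_prod_of_monic _ _ (fun i _ => monic_X_add_C (x i))]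
  simp

lemma coeff_P (s : ℕ) (hs : s ≤ m) : (P m x).coeff (m - s) = esymmR m x s := by
  rw [P, Finset.prod_X_add_C_coeff _ _ (by simpa using Nat.sub_le m s)]
  rw [esymmR]
  congr 1
  simp [Nat.sub_sub_self hs]

lemma roots_P : (P m x).roots = (Finset.univ.val.map (fun i => -(x i))) := by
  have h : P m x = (((Finset.univ.val.map (fun i => -(x i)))).map (fun a => X - C a)).prod := by
    rw [P, Finset.prod_eq_multiset_prod, Multiset.map_map]
    congr 1
    apply Multiset.map_congr rfl
    intro i _
    simp [sub_neg_eq_add]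
  rw [h, roots_multiset_prod_X_sub_C]

lemma splits_P : (P m x).Splits := by
  rw [splits_iff_card_roots, roots_P, natDegree_P]
  simp

lemma splits_derivative {p : ℝ[X]} (hp : p.Splits) :
    (derivative p).Splits := by
  by_cases h0 : derivative p = 0
  · rw [h0]; exact Splits.zero
  rw [splits_iff_card_roots] at hp ⊢
  have h1 := p.card_roots_le_derivative
  have h2 := (derivative p).card_roots'
  have h3 : (derivative p).natDegree ≤ p.natDegree - 1 := natDegree_derivative_le p
  have h4 : 1 ≤ p.natDegree := by
    by_contra h
    have : p.natDegree = 0 := by omega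
    have := p.eq_C_of_natDegree_eq_zero this
    rw [this] at h0; simp at h0
  omega

lemma splits_iterate_derivative {p : ℝ[X]} (hp : p.Splits) (d : ℕ) :
    (derivative^[d] p).Splits := by
  induction d with
  | zero => simpa
  | succ d ih => rw [Function.iterate_succ_apply']; exact splits_derivative ih


lemma reverse_X_sub_C (r : ℝ) : (X - C r).reverse = C (-r) * X + 1 := by
  have hd : (X - C r).natDegree = 1 := natDegree_X_sub_C r
  ext n
  rw [coeff_reverse, hd]
  match n with
  | 0 => rw [revAt_le (Nat.zero_le 1)]; simp
  | 1 => rw [revAt_le (le_refl 1)]; simp [coeff_one]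
  | (k+2) =>
    rw [revAt_eq_self_of_lt (by omega)]
    simp [coeff_X, coeff_one, coeff_C]

lemma splits_reverse {p : ℝ[X]} (hp : p.Splits) :
    p.reverse.Splits := by
  by_cases h0 : p = 0
  · simp [h0, Splits.zero]
  have heq := Splits.eq_prod_roots hp
  have key : ∀ (s : Multiset ℝ) (a : ℝ),
      (C a * (s.map fun r => X - C r).prod).reverse.Splits := by
    intro s
    induction s using Multiset.induction with
    | empty => intro a; simpa using Splits.C _
    | cons r s ih =>
      intro a
      have : C a * ((r ::ₘ s).map fun r => X - C r).prod
          = (X - C r) * (C a * (s.map fun r => X - C r).prod) := by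
        rw [Multiset.map_cons, Multiset.prod_cons]; ring
      rw [this, reverse_mul_of_domain]
      exact Splits.mul (Splits.of_natDegree_le_one
        (le_trans (reverse_natDegree_le _) (natDegree_X_sub_C r).le)) (ih a)
  rw [heq]; exact key _ _

lemma reverse_of_no_zero_root {p : ℝ[X]} (hp : p.Splits) (h0 : p ≠ 0)
    (hz : p.coeff 0 ≠ 0) :
    p.reverse.roots = p.roots.map (·⁻¹) ∧ p.reverse.natDegree = p.natDegree := by
  have heq := Splits.eq_prod_roots hp
  have hcard : Multiset.card p.roots = p.natDegree := (splits_iff_card_roots).mp hp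
  have hnz : ∀ r ∈ p.roots, r ≠ 0 := by
    intro r hr hr0
    apply hz
    have := isRoot_of_mem_roots hr
    rw [hr0] at this
    simpa [IsRoot, ← coeff_zero_eq_eval_zero] using this
  have key : ∀ (s : Multiset ℝ) (a : ℝ), a ≠ 0 → (∀ r ∈ s, r ≠ (0:ℝ)) →
      ∃ b : ℝ, b ≠ 0 ∧ (C a * (s.map fun r => X - C r).prod).reverse
        = C b * ((s.map (·⁻¹)).map fun r => X - C r).prod := by
    intro s
    induction s using Multiset.induction with
    | empty => intro a ha _; exact ⟨a, ha, by simp⟩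
    | cons r s ih =>
      intro a ha hmem
      have hr : r ≠ 0 := hmem r (Multiset.mem_cons_self _ _)
      obtain ⟨b, hb, hbe⟩ := ih a ha (fun t ht => hmem t (Multiset.mem_cons_of_mem ht))
      have e1 : C a * ((r ::ₘ s).map fun r => X - C r).prod
          = (X - C r) * (C a * (s.map fun r => X - C r).prod) := by
        rw [Multiset.map_cons, Multiset.prod_cons]; ring
      refine ⟨-r * b, by simp [hr, hb], ?_⟩
      rw [e1, reverse_mul_of_domain, hbe, reverse_X_sub_C]
      have e2 : (C (-r) * X + 1 : ℝ[X]) = C (-r) * (X - C r⁻¹) := by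
        rw [mul_sub, ← C_mul]
        field_simp
        simp
      rw [e2, Multiset.map_cons, Multiset.map_cons, Multiset.prod_cons, C_mul]
      ring
  obtain ⟨b, hb, hbe⟩ := key p.roots p.leadingCoeff (leadingCoeff_ne_zero.mpr h0) hnz
  rw [← heq] at hbe
  constructor
  · rw [hbe, roots_C_mul _ hb, roots_multiset_prod_X_sub_C]
  · rw [hbe, natDegree_C_mul hb, natDegree_multiset_prod_of_monic]
    · simp [Multiset.map_map, Function.comp_def, natDegree_X_sub_C, hcard]
    · intro f hf
      simp only [Multiset.mem_map] at hf
      obtain ⟨t, _, rfl⟩ := hf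
      exact monic_X_sub_C t

lemma quad_factored {Q : ℝ[X]} (hd : Q.natDegree ≤ 2) (hs : Q.Splits)
    (h2 : Q.coeff 2 ≠ 0) :
    ∃ a r s : ℝ, a ≠ 0 ∧ Q.roots = {r, s} ∧
      Q.coeff 2 = a ∧ Q.coeff 1 = -(a * (r + s)) ∧ Q.coeff 0 = a * (r * s) := by
  have hdeg : Q.natDegree = 2 := le_antisymm hd (le_natDegree_of_ne_zero h2)
  have hQ0 : Q ≠ 0 := fun h => h2 (by simp [h])
  have hcard : Multiset.card Q.roots = 2 := by
    rw [splits_iff_card_roots.mp hs, hdeg]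
  obtain ⟨r, s, hrs⟩ := Multiset.card_eq_two.mp hcard
  have heq := Splits.eq_prod_roots hs
  rw [hrs] at heq
  have hlc : Q.leadingCoeff = Q.coeff 2 := by rw [leadingCoeff, hdeg]
  set a := Q.leadingCoeff with ha
  have hexp : Q = C a * X ^ 2 - C (a * (r + s)) * X + C (a * (r * s)) := by
    rw [heq]
    simp only [Multiset.insert_eq_cons, Multiset.map_cons, Multiset.prod_cons,
      Multiset.map_singleton, Multiset.prod_singleton, C_mul, C_add]
    ring
  refine ⟨a, r, s, leadingCoeff_ne_zero.mpr hQ0, hrs, hlc.symm, ?_, ?_⟩ <;>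
    · rw [hexp]
      simp [coeff_one, coeff_C]
lemma disc_le {Q : ℝ[X]} (hd : Q.natDegree ≤ 2) (hs : Q.Splits) :
    4 * Q.coeff 2 * Q.coeff 0 ≤ Q.coeff 1 ^ 2 := by
  by_cases h2 : Q.coeff 2 = 0
  · rw [h2]; ring_nf; positivity
  obtain ⟨a, r, s, ha, _, e2, e1, e0⟩ := quad_factored hd hs h2
  rw [e2, e1, e0]
  nlinarith [sq_nonneg (a * (r - s))]

lemma disc_lt {Q : ℝ[X]} (hd : Q.natDegree ≤ 2) (hs : Q.Splits)
    (h2 : Q.coeff 2 ≠ 0) (hdist : 2 ≤ Q.roots.toFinset.card) :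
    4 * Q.coeff 2 * Q.coeff 0 < Q.coeff 1 ^ 2 := by
  obtain ⟨a, r, s, ha, hroots, e2, e1, e0⟩ := quad_factored hd hs h2
  have hrs : r ≠ s := by
    intro h
    subst h
    rw [hroots] at hdist
    simp at hdist
  rw [e2, e1, e0]
  have h1 : a * (r - s) ≠ 0 := mul_ne_zero ha (sub_ne_zero.mpr hrs)
  nlinarith [sq_pos_of_ne_zero h1]

lemma deriv_two_distinct {p : ℝ[X]} (hs : p.Splits)
    (hdeg : 3 ≤ p.natDegree) (hdist : 2 ≤ p.roots.toFinset.card) :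
    2 ≤ (derivative p).roots.toFinset.card := by
  have hp0 : p ≠ 0 := fun h => by simp [h, natDegree_zero] at hdeg
  have hd0 : derivative p ≠ 0 := by
    intro h
    have := natDegree_eq_zero_of_derivative_eq_zero h
    omega
  have hcard : Multiset.card p.roots = p.natDegree := splits_iff_card_roots.mp hs
  have key := p.card_roots_toFinset_le_card_roots_derivative_diff_roots_succ
  by_cases h3 : 3 ≤ p.roots.toFinset.card
  · have : 2 ≤ ((derivative p).roots.toFinset \ p.roots.toFinset).card := by omega
    calc 2 ≤ ((derivative p).roots.toFinset \ p.roots.toFinset).card := this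
    _ ≤ (derivative p).roots.toFinset.card := Finset.card_le_card (Finset.sdiff_subset)
  · -- exactly two distinct roots, some multiple root x
    have h2 : p.roots.toFinset.card = 2 := by omega
    have hx : ∃ x ∈ p.roots, 2 ≤ p.roots.count x := by
      by_contra hcon
      push_neg at hcon
      have hnd : p.roots.Nodup := Multiset.nodup_iff_count_le_one.mpr (by
        intro x
        by_cases hxx : x ∈ p.roots
        · exact Nat.lt_succ_iff.mp (hcon x hxx)
        · simp [Multiset.count_eq_zero_of_notMem hxx])
      have := Multiset.toFinset_card_eq_card_iff_nodup.mpr hnd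
      omega
    obtain ⟨x, hxm, hxc⟩ := hx
    have hxd : x ∈ (derivative p).roots := by
      rw [mem_roots hd0]
      rw [count_roots] at hxc
      have h1 := derivative_rootMultiplicity_of_root (isRoot_of_mem_roots hxm)
      have : 1 ≤ (derivative p).rootMultiplicity x := by omega
      exact (rootMultiplicity_pos hd0).mp (by omega)
    have hone : 1 ≤ ((derivative p).roots.toFinset \ p.roots.toFinset).card := by omega
    have hsub : insert x ((derivative p).roots.toFinset \ p.roots.toFinset)
        ⊆ (derivative p).roots.toFinset := by
      intro y hy
      rcases Finset.mem_insert.mp hy with rfl | hy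
      · exact Multiset.mem_toFinset.mpr hxd
      · exact (Finset.mem_sdiff.mp hy).1
    have hnotin : x ∉ (derivative p).roots.toFinset \ p.roots.toFinset := by
      simp [Finset.mem_sdiff, Multiset.mem_toFinset.mpr hxm]
    calc 2 = 1 + 1 := rfl
    _ ≤ ((derivative p).roots.toFinset \ p.roots.toFinset).card + 1 := by omega
    _ = (insert x ((derivative p).roots.toFinset \ p.roots.toFinset)).card :=
      (Finset.card_insert_of_notMem hnotin).symm
    _ ≤ (derivative p).roots.toFinset.card := Finset.card_le_card hsub

lemma natDegree_deriv_real {p : ℝ[X]} (h : 1 ≤ p.natDegree) :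
    (derivative p).natDegree = p.natDegree - 1 := by
  refine le_antisymm (natDegree_derivative_le p) (le_natDegree_of_ne_zero ?_)
  rw [coeff_derivative]
  have h1 : p.natDegree - 1 + 1 = p.natDegree := by omega
  rw [h1]
  have h2 : p.coeff p.natDegree ≠ 0 := by
    rw [← leadingCoeff]
    exact leadingCoeff_ne_zero.mpr (fun hh => by simp [hh] at h)
  positivity
lemma iter_distinct (d : ℕ) : ∀ p : ℝ[X], p.Splits → d + 2 ≤ p.natDegree →
    2 ≤ p.roots.toFinset.card →
    2 ≤ (derivative^[d] p).roots.toFinset.card ∧ (derivative^[d] p).Splits ∧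
      (derivative^[d] p).natDegree = p.natDegree - d := by
  induction d with
  | zero => intro p hs _ h2; exact ⟨h2, hs, by simp⟩
  | succ d ih =>
    intro p hs hdeg h2
    have hd1 : (derivative p).natDegree = p.natDegree - 1 := natDegree_deriv_real (by omega)
    have hder2 : 2 ≤ (derivative p).roots.toFinset.card :=
      deriv_two_distinct hs (by omega) h2
    obtain ⟨a, b, c⟩ := ih (derivative p) (splits_derivative hs) (by omega) hder2
    rw [Function.iterate_succ_apply]
    exact ⟨a, b, by rw [c, hd1]; omega⟩
lemma esymmR_zero : esymmR m x 0 = 1 := by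
  simp [esymmR]

section Newt
variable {j : ℕ} (hj : 1 ≤ j) (hjm : j + 1 ≤ m)

noncomputable def qpoly (m : ℕ) (x : Fin m → ℝ) (j : ℕ) : ℝ[X] :=
  derivative^[m - j - 1] (P m x)

noncomputable def Qpoly (m : ℕ) (x : Fin m → ℝ) (j : ℕ) : ℝ[X] :=
  derivative^[j - 1] (qpoly m x j).reverse

include hj hjm

lemma coeff_q (t : ℕ) (ht : t ≤ j + 1) :
    (qpoly m x j).coeff t
      = ((t + (m - j - 1)).descFactorial (m - j - 1) : ℝ) * esymmR m x (j + 1 - t) := by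
  rw [qpoly, coeff_iterate_derivative, nsmul_eq_mul]
  congr 1
  rw [show t + (m - j - 1) = m - (j + 1 - t) by omega, coeff_P x _ (by omega)]

lemma natDegree_q : (qpoly m x j).natDegree = j + 1 := by
  refine le_antisymm ?_ (le_natDegree_of_ne_zero ?_)
  · refine (natDegree_iterate_derivative _ _).trans ?_
    rw [natDegree_P]; omega
  · rw [coeff_q x hj hjm (j+1) le_rfl]
    simp only [Nat.sub_self, esymmR_zero, mul_one]
    have : (j + 1 + (m - j - 1)).descFactorial (m - j - 1) ≠ 0 := by
      rw [Ne, Nat.descFactorial_eq_zero_iff_lt]; omega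
    positivity

lemma splits_q : (qpoly m x j).Splits :=
  splits_iterate_derivative (splits_P x) _

lemma coeff_Rq (i : ℕ) (hi : i ≤ j + 1) :
    (qpoly m x j).reverse.coeff i = (qpoly m x j).coeff (j + 1 - i) := by
  rw [coeff_reverse, natDegree_q x hj hjm, revAt_le hi]

lemma coeff_Q (i : ℕ) (hi : i ≤ 2) :
    (Qpoly m x j).coeff i
      = ((i + (j - 1)).descFactorial (j - 1) : ℝ)
        * (((2 - i) + (m - j - 1)).descFactorial (m - j - 1) : ℝ)
        * esymmR m x (j - 1 + i) := by
  rw [Qpoly, coeff_iterate_derivative, nsmul_eq_mul,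
    coeff_Rq x hj hjm _ (by omega),
    show j + 1 - (i + (j - 1)) = 2 - i by omega,
    coeff_q x hj hjm _ (by omega),
    show j + 1 - (2 - i) = j - 1 + i by omega]
  ring

lemma natDegree_Q : (Qpoly m x j).natDegree ≤ 2 := by
  refine (natDegree_iterate_derivative _ _).trans ?_
  have := reverse_natDegree_le (qpoly m x j)
  rw [natDegree_q x hj hjm] at this
  omega

lemma splits_Q : (Qpoly m x j).Splits :=
  splits_iterate_derivative (splits_reverse (splits_q x hj hjm)) _

end Newt
section NewtIneq
variable {j : ℕ} (hj : 1 ≤ j) (hjm : j + 1 ≤ m)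

include hj hjm

lemma factE1 : ((j.descFactorial (j - 1) : ℝ)
      * ((1 + (m - j - 1)).descFactorial (m - j - 1) : ℝ)) * (m.choose j : ℝ)
      = (m.factorial : ℝ) := by
  have n2 : j.descFactorial (j - 1) = j.factorial := by
    have h := Nat.factorial_mul_descFactorial (show j - 1 ≤ j by omega)
    rw [show j - (j - 1) = 1 by omega] at h
    simpa using h
  have n5 : (1 + (m - j - 1)).descFactorial (m - j - 1) = (m - j).factorial := by
    rw [show (1 : ℕ) + (m - j - 1) = m - j by omega]
    have h := Nat.factorial_mul_descFactorial (show m - j - 1 ≤ m - j by omega)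
    rw [show m - j - (m - j - 1) = 1 by omega] at h
    simpa using h
  have hc := Nat.choose_mul_factorial_mul_factorial (show j ≤ m by omega)
  have : (j.factorial * (m - j).factorial * m.choose j : ℕ) = m.factorial := by
    rw [← hc]; ring
  rw [n2, n5]
  exact_mod_cast this

lemma factE2 : 2 * (((j + 1).descFactorial (j - 1) : ℝ)
      * (((m - j - 1)).descFactorial (m - j - 1) : ℝ)) * (m.choose (j + 1) : ℝ)
      = (m.factorial : ℝ) := by
  have n1 : (j + 1).descFactorial (j - 1) * 2 = (j + 1).factorial := by
    have h := Nat.factorial_mul_descFactorial (show j - 1 ≤ j + 1 by omega)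
    rw [show j + 1 - (j - 1) = 2 by omega] at h
    rw [← h]
    rw [show Nat.factorial 2 = 2 from rfl]
    ring
  have n4 : (m - j - 1).descFactorial (m - j - 1) = (m - j - 1).factorial :=
    Nat.descFactorial_self _
  have hc := Nat.choose_mul_factorial_mul_factorial (show j + 1 ≤ m by omega)
  rw [show m - (j + 1) = m - j - 1 by omega] at hc
  have : (2 * ((j + 1).descFactorial (j - 1) * (m - j - 1).descFactorial (m - j - 1))
      * m.choose (j + 1) : ℕ) = m.factorial := by
    rw [n4, ← hc, ← n1]; ring
  exact_mod_cast this

lemma factE0 : 2 * (((j - 1).descFactorial (j - 1) : ℝ)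
      * ((2 + (m - j - 1)).descFactorial (m - j - 1) : ℝ)) * (m.choose (j - 1) : ℝ)
      = (m.factorial : ℝ) := by
  have n3 : (j - 1).descFactorial (j - 1) = (j - 1).factorial := Nat.descFactorial_self _
  have n6 : (2 + (m - j - 1)).descFactorial (m - j - 1) * 2 = (m - j + 1).factorial := by
    rw [show (2 : ℕ) + (m - j - 1) = m - j + 1 by omega]
    have h := Nat.factorial_mul_descFactorial (show m - j - 1 ≤ m - j + 1 by omega)
    rw [show m - j + 1 - (m - j - 1) = 2 by omega] at h
    rw [← h, show Nat.factorial 2 = 2 from rfl]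
    ring
  have hc := Nat.choose_mul_factorial_mul_factorial (show j - 1 ≤ m by omega)
  rw [show m - (j - 1) = m - j + 1 by omega] at hc
  have : (2 * ((j - 1).descFactorial (j - 1) * (2 + (m - j - 1)).descFactorial (m - j - 1))
      * m.choose (j - 1) : ℕ) = m.factorial := by
    rw [n3, ← hc, ← n6]; ring
  exact_mod_cast this

lemma newton_aux (core : 4 * (Qpoly m x j).coeff 2 * (Qpoly m x j).coeff 0
      ≤ ((Qpoly m x j).coeff 1) ^ 2) :
    Hnorm m x (j - 1) * Hnorm m x (j + 1) ≤ Hnorm m x j ^ 2 := by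
  rw [coeff_Q x hj hjm 2 le_rfl, coeff_Q x hj hjm 1 (by omega),
      coeff_Q x hj hjm 0 (by omega)] at core
  set A2 : ℝ := ((2 + (j - 1)).descFactorial (j - 1) : ℝ) with hA2
  set B2 : ℝ := (((2 - 2) + (m - j - 1)).descFactorial (m - j - 1) : ℝ) with hB2
  set A1 : ℝ := ((1 + (j - 1)).descFactorial (j - 1) : ℝ) with hA1
  set B1 : ℝ := (((2 - 1) + (m - j - 1)).descFactorial (m - j - 1) : ℝ) with hB1
  set A0 : ℝ := ((0 + (j - 1)).descFactorial (j - 1) : ℝ) with hA0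
  set B0 : ℝ := (((2 - 0) + (m - j - 1)).descFactorial (m - j - 1) : ℝ) with hB0
  set σ2 : ℝ := esymmR m x (j - 1 + 2) with hσ2
  set σ1 : ℝ := esymmR m x (j - 1 + 1) with hσ1
  set σ0 : ℝ := esymmR m x (j - 1 + 0) with hσ0
  set c2 : ℝ := (m.choose (j + 1) : ℝ) with hc2
  set c1 : ℝ := (m.choose j : ℝ) with hc1
  set c0 : ℝ := (m.choose (j - 1) : ℝ) with hc0
  have hE2 : 2 * (A2 * B2) * c2 = (m.factorial : ℝ) := by
    rw [hA2, hB2, show 2 + (j - 1) = j + 1 by omega, show 2 - 2 + (m - j - 1) = m - j - 1 by omega]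
    exact factE2 hj hjm
  have hE1 : (A1 * B1) * c1 = (m.factorial : ℝ) := by
    rw [hA1, hB1, show 1 + (j - 1) = j by omega, show 2 - 1 + (m - j - 1) = 1 + (m - j - 1) by omega]
    exact factE1 hj hjm
  have hE0 : 2 * (A0 * B0) * c0 = (m.factorial : ℝ) := by
    rw [hA0, hB0, show 0 + (j - 1) = j - 1 by omega, show 2 - 0 + (m - j - 1) = 2 + (m - j - 1) by omega]
    exact factE0 hj hjm
  have hσ2e : σ2 = esymmR m x (j + 1) := by rw [hσ2, show j - 1 + 2 = j + 1 by omega]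
  have hσ1e : σ1 = esymmR m x j := by rw [hσ1, show j - 1 + 1 = j by omega]
  have hσ0e : σ0 = esymmR m x (j - 1) := by rw [hσ0]; norm_num
  rw [Hnorm, Hnorm, Hnorm, ← hσ2e, ← hσ1e, ← hσ0e, ← hc2, ← hc1, ← hc0]
  have hc2p : 0 < c2 := by
    rw [hc2]; exact_mod_cast Nat.choose_pos (show j + 1 ≤ m by omega)
  have hc1p : 0 < c1 := by
    rw [hc1]; exact_mod_cast Nat.choose_pos (show j ≤ m by omega)
  have hc0p : 0 < c0 := by
    rw [hc0]; exact_mod_cast Nat.choose_pos (show j - 1 ≤ m by omega)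
  rw [div_mul_div_comm, div_pow, div_le_div_iff₀ (by positivity) (by positivity)]
  -- goal : σ0 * σ2 * c1 ^ 2 ≤ σ1 ^ 2 * (c0 * c2)
  have hmf : (0 : ℝ) < (m.factorial : ℝ) := by positivity
  have key : 4 * (A2 * B2 * σ2) * (A0 * B0 * σ0) * (c1 ^ 2 * (c0 * c2))
      ≤ (A1 * B1 * σ1) ^ 2 * (c1 ^ 2 * (c0 * c2)) := by
    apply mul_le_mul_of_nonneg_right core (by positivity)
  have l1 : 4 * (A2 * B2 * σ2) * (A0 * B0 * σ0) * (c1 ^ 2 * (c0 * c2))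
      = (σ0 * σ2 * c1 ^ 2) * (m.factorial : ℝ) ^ 2 := by
    linear_combination (σ0 * σ2 * c1 ^ 2) * ((2 * (A0 * B0) * c0) * hE2
      + (m.factorial : ℝ) * hE0)
  have l2 : (A1 * B1 * σ1) ^ 2 * (c1 ^ 2 * (c0 * c2))
      = (σ1 ^ 2 * (c0 * c2)) * (m.factorial : ℝ) ^ 2 := by
    linear_combination (σ1 ^ 2 * (c0 * c2)) * ((A1 * B1 * c1 + (m.factorial : ℝ)) * hE1)
  rw [l1, l2] at key
  exact le_of_mul_le_mul_right key (by positivity)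

lemma newton : Hnorm m x (j - 1) * Hnorm m x (j + 1) ≤ Hnorm m x j ^ 2 :=
  newton_aux x hj hjm (disc_le (natDegree_Q x hj hjm) (splits_Q x hj hjm))

end NewtIneq
section NewtStrict
variable {j : ℕ} (hj : 1 ≤ j) (hjm : j + 1 ≤ m)

lemma descFactorial_cast_ne {a b : ℕ} (hab : b ≤ a) : ((a.descFactorial b : ℝ)) ≠ 0 := by
  have : a.descFactorial b ≠ 0 := by rw [Ne, Nat.descFactorial_eq_zero_iff_lt]; omega
  exact_mod_cast this

include hj hjm

lemma Q_two_distinct (hσ2 : esymmR m x (j + 1) ≠ 0)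
    (hdist : 2 ≤ (P m x).roots.toFinset.card) :
    2 ≤ (Qpoly m x j).roots.toFinset.card := by
  obtain ⟨hq2, hqs, hqd⟩ := iter_distinct (m - j - 1) (P m x) (splits_P x)
    (by rw [natDegree_P]; omega) hdist
  have hqd' : (qpoly m x j).natDegree = j + 1 := natDegree_q x hj hjm
  have hq0 : qpoly m x j ≠ 0 := by
    intro h
    rw [h, natDegree_zero] at hqd'
    omega
  have hqc0 : (qpoly m x j).coeff 0 ≠ 0 := by
    rw [coeff_q x hj hjm 0 (by omega)]
    simp only [Nat.zero_add, Nat.sub_zero]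
    exact mul_ne_zero (descFactorial_cast_ne le_rfl) hσ2
  obtain ⟨hroots, hdeg⟩ := reverse_of_no_zero_root (splits_q x hj hjm) hq0 hqc0
  have hRq2 : 2 ≤ (qpoly m x j).reverse.roots.toFinset.card := by
    obtain ⟨a, ha, b, hb, hab⟩ := Finset.one_lt_card.mp (by omega : 1 < ((⇑derivative)^[m - j - 1] (P m x)).roots.toFinset.card)
    rw [Multiset.mem_toFinset] at ha hb
    have : 1 < (qpoly m x j).reverse.roots.toFinset.card := by
      refine Finset.one_lt_card.mpr ⟨a⁻¹, ?_, b⁻¹, ?_, fun h => hab (inv_injective h)⟩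
      · rw [Multiset.mem_toFinset, hroots]; exact Multiset.mem_map_of_mem _ ha
      · rw [Multiset.mem_toFinset, hroots]; exact Multiset.mem_map_of_mem _ hb
    omega
  have := iter_distinct (j - 1) (qpoly m x j).reverse (splits_reverse (splits_q x hj hjm))
    (by rw [hdeg, hqd']; omega) hRq2
  rw [Qpoly]
  exact this.1

lemma newton_aux_lt (core : 4 * (Qpoly m x j).coeff 2 * (Qpoly m x j).coeff 0
      < ((Qpoly m x j).coeff 1) ^ 2) :
    Hnorm m x (j - 1) * Hnorm m x (j + 1) < Hnorm m x j ^ 2 := by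
  rw [coeff_Q x hj hjm 2 le_rfl, coeff_Q x hj hjm 1 (by omega),
      coeff_Q x hj hjm 0 (by omega)] at core
  set A2 : ℝ := ((2 + (j - 1)).descFactorial (j - 1) : ℝ) with hA2
  set B2 : ℝ := (((2 - 2) + (m - j - 1)).descFactorial (m - j - 1) : ℝ) with hB2
  set A1 : ℝ := ((1 + (j - 1)).descFactorial (j - 1) : ℝ) with hA1
  set B1 : ℝ := (((2 - 1) + (m - j - 1)).descFactorial (m - j - 1) : ℝ) with hB1
  set A0 : ℝ := ((0 + (j - 1)).descFactorial (j - 1) : ℝ) with hA0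
  set B0 : ℝ := (((2 - 0) + (m - j - 1)).descFactorial (m - j - 1) : ℝ) with hB0
  set σ2 : ℝ := esymmR m x (j - 1 + 2) with hσ2
  set σ1 : ℝ := esymmR m x (j - 1 + 1) with hσ1
  set σ0 : ℝ := esymmR m x (j - 1 + 0) with hσ0
  set c2 : ℝ := (m.choose (j + 1) : ℝ) with hc2
  set c1 : ℝ := (m.choose j : ℝ) with hc1
  set c0 : ℝ := (m.choose (j - 1) : ℝ) with hc0
  have hE2 : 2 * (A2 * B2) * c2 = (m.factorial : ℝ) := by
    rw [hA2, hB2, show 2 + (j - 1) = j + 1 by omega, show 2 - 2 + (m - j - 1) = m - j - 1 by omega]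
    exact factE2 hj hjm
  have hE1 : (A1 * B1) * c1 = (m.factorial : ℝ) := by
    rw [hA1, hB1, show 1 + (j - 1) = j by omega, show 2 - 1 + (m - j - 1) = 1 + (m - j - 1) by omega]
    exact factE1 hj hjm
  have hE0 : 2 * (A0 * B0) * c0 = (m.factorial : ℝ) := by
    rw [hA0, hB0, show 0 + (j - 1) = j - 1 by omega, show 2 - 0 + (m - j - 1) = 2 + (m - j - 1) by omega]
    exact factE0 hj hjm
  have hσ2e : σ2 = esymmR m x (j + 1) := by rw [hσ2, show j - 1 + 2 = j + 1 by omega]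
  have hσ1e : σ1 = esymmR m x j := by rw [hσ1, show j - 1 + 1 = j by omega]
  have hσ0e : σ0 = esymmR m x (j - 1) := by rw [hσ0]; norm_num
  rw [Hnorm, Hnorm, Hnorm, ← hσ2e, ← hσ1e, ← hσ0e, ← hc2, ← hc1, ← hc0]
  have hc2p : 0 < c2 := by
    rw [hc2]; exact_mod_cast Nat.choose_pos (show j + 1 ≤ m by omega)
  have hc1p : 0 < c1 := by
    rw [hc1]; exact_mod_cast Nat.choose_pos (show j ≤ m by omega)
  have hc0p : 0 < c0 := by
    rw [hc0]; exact_mod_cast Nat.choose_pos (show j - 1 ≤ m by omega)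
  rw [div_mul_div_comm, div_pow, div_lt_div_iff₀ (by positivity) (by positivity)]
  have key : 4 * (A2 * B2 * σ2) * (A0 * B0 * σ0) * (c1 ^ 2 * (c0 * c2))
      < (A1 * B1 * σ1) ^ 2 * (c1 ^ 2 * (c0 * c2)) := by
    apply mul_lt_mul_of_pos_right core (by positivity)
  have l1 : 4 * (A2 * B2 * σ2) * (A0 * B0 * σ0) * (c1 ^ 2 * (c0 * c2))
      = (σ0 * σ2 * c1 ^ 2) * (m.factorial : ℝ) ^ 2 := by
    linear_combination (σ0 * σ2 * c1 ^ 2) * ((2 * (A0 * B0) * c0) * hE2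
      + (m.factorial : ℝ) * hE0)
  have l2 : (A1 * B1 * σ1) ^ 2 * (c1 ^ 2 * (c0 * c2))
      = (σ1 ^ 2 * (c0 * c2)) * (m.factorial : ℝ) ^ 2 := by
    linear_combination (σ1 ^ 2 * (c0 * c2)) * ((A1 * B1 * c1 + (m.factorial : ℝ)) * hE1)
  rw [l1, l2] at key
  exact lt_of_mul_lt_mul_right key (by positivity)

lemma newton_lt (hσ2 : esymmR m x (j + 1) ≠ 0)
    (hdist : 2 ≤ (P m x).roots.toFinset.card) :
    Hnorm m x (j - 1) * Hnorm m x (j + 1) < Hnorm m x j ^ 2 := by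
  refine newton_aux_lt x hj hjm (disc_lt (natDegree_Q x hj hjm) (splits_Q x hj hjm)
    ?_ (Q_two_distinct x hj hjm hσ2 hdist))
  rw [coeff_Q x hj hjm 2 le_rfl]
  exact mul_ne_zero (mul_ne_zero (descFactorial_cast_ne (by omega))
    (descFactorial_cast_ne (by omega))) (by rwa [show j - 1 + 2 = j + 1 by omega])

end NewtStrict
lemma Hnorm_zero : Hnorm m x 0 = 1 := by simp [Hnorm, esymmR_zero]

lemma Hnorm_pos {i : ℕ} (hi : i ≤ m) (h : 0 < esymmR m x i) : 0 < Hnorm m x i := by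
  have : (0 : ℝ) < (m.choose i : ℝ) := by exact_mod_cast Nat.choose_pos hi
  exact div_pos h this

lemma P_two_distinct (hne : ∃ i i', x i ≠ x i') : 2 ≤ (P m x).roots.toFinset.card := by
  obtain ⟨i, i', hne⟩ := hne
  have h1 : 1 < (P m x).roots.toFinset.card := by
    refine Finset.one_lt_card.mpr ⟨-(x i), ?_, -(x i'), ?_, by simpa using hne⟩ <;>
    · rw [Multiset.mem_toFinset, roots_P]
      exact Multiset.mem_map_of_mem _ (by simp)
  omega

section Chain
variable {K : ℕ} (hK : K ≤ m)
  (hσ : ∀ i, 1 ≤ i → i ≤ K → 0 < esymmR m x i)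
  (hdist : 2 ≤ (P m x).roots.toFinset.card)

include hK hσ hdist

lemma chain_A : ∀ j, 1 ≤ j → j + 1 ≤ K →
    Hnorm m x (j + 1) ^ j < Hnorm m x j ^ (j + 1) := by
  intro j
  induction j with
  | zero => omega
  | succ j ih =>
    intro _ hjK
    by_cases hj0 : j = 0
    · subst hj0
      have hN := newton_lt x (le_refl 1) (by omega) (ne_of_gt (hσ 2 (by omega) (by omega))) hdist
      simp only [Nat.sub_self] at hN
      rw [Hnorm_zero] at hN
      simpa using hN
    · have hj1 : 1 ≤ j := by omega
      have ihj := ih hj1 (by omega)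
      have hN := newton_lt x (show 1 ≤ j + 1 by omega) (by omega)
        (ne_of_gt (hσ (j + 2) (by omega) (by omega))) hdist
      simp only [Nat.add_sub_cancel] at hN
      -- hN : Hnorm m x j * Hnorm m x (j + 2) < Hnorm m x (j + 1) ^ 2
      have hp0 : 0 < Hnorm m x j := Hnorm_pos x (by omega) (hσ j hj1 (by omega))
      have hp1 : 0 < Hnorm m x (j + 1) := Hnorm_pos x (by omega) (hσ (j + 1) (by omega) (by omega))
      have hp2 : 0 < Hnorm m x (j + 2) := Hnorm_pos x (by omega) (hσ (j + 2) (by omega) (by omega))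
      have h1 : (Hnorm m x j * Hnorm m x (j + 2)) ^ (j + 1) < (Hnorm m x (j + 1) ^ 2) ^ (j + 1) :=
        pow_lt_pow_left₀ hN (by positivity) (by omega)
      rw [mul_pow, ← pow_mul] at h1
      have h2 : Hnorm m x (j + 1) ^ j * Hnorm m x (j + 2) ^ (j + 1)
          < Hnorm m x j ^ (j + 1) * Hnorm m x (j + 2) ^ (j + 1) :=
        mul_lt_mul_of_pos_right ihj (by positivity)
      have h3 : Hnorm m x (j + 1) ^ j * Hnorm m x (j + 2) ^ (j + 1)
          < Hnorm m x (j + 1) ^ (2 * (j + 1)) := h2.trans h1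
      have e : Hnorm m x (j + 1) ^ (2 * (j + 1))
          = Hnorm m x (j + 1) ^ j * Hnorm m x (j + 1) ^ (j + 2) := by
        rw [← pow_add]
        congr 1
        omega
      rw [e] at h3
      exact (mul_lt_mul_iff_right₀ (show (0:ℝ) < Hnorm m x (j + 1) ^ j by positivity)).mp h3
lemma chain_cross : ∀ l k, 1 ≤ l → l < k → k ≤ K →
    Hnorm m x k ^ l < Hnorm m x l ^ k := by
  intro l k hl
  induction k with
  | zero => omega
  | succ k ih =>
    intro hlk hkK
    by_cases hke : l = k
    · subst hke
      exact chain_A x hK hσ hdist l hl (by omega)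
    · have hlk' : l < k := by omega
      have IH := ih hlk' (by omega)
      have hA := chain_A x hK hσ hdist k (by omega) (by omega)
      have hpl : 0 < Hnorm m x l := Hnorm_pos x (by omega) (hσ l hl (by omega))
      have hpk : 0 < Hnorm m x k := Hnorm_pos x (by omega) (hσ k (by omega) (by omega))
      have hpk1 : 0 < Hnorm m x (k + 1) := Hnorm_pos x (by omega) (hσ (k + 1) (by omega) (by omega))
      -- raise hA to l, IH to k+1
      have h1 : (Hnorm m x (k + 1) ^ k) ^ l < (Hnorm m x k ^ (k + 1)) ^ l :=
        pow_lt_pow_left₀ hA (by positivity) (by omega)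
      have h2 : (Hnorm m x k ^ l) ^ (k + 1) < (Hnorm m x l ^ k) ^ (k + 1) :=
        pow_lt_pow_left₀ IH (by positivity) (by omega)
      rw [← pow_mul, ← pow_mul] at h1 h2
      have h3 : Hnorm m x (k + 1) ^ (k * l) < Hnorm m x l ^ (k * (k + 1)) := by
        calc Hnorm m x (k + 1) ^ (k * l) < Hnorm m x k ^ ((k + 1) * l) := h1
        _ = Hnorm m x k ^ (l * (k + 1)) := by rw [Nat.mul_comm]
        _ < Hnorm m x l ^ (k * (k + 1)) := h2
      have h4 : (Hnorm m x (k + 1) ^ l) ^ k < (Hnorm m x l ^ (k + 1)) ^ k := by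
        rw [← pow_mul, ← pow_mul]
        rw [show l * k = k * l by ring, show (k + 1) * k = k * (k + 1) by ring]
        exact h3
      exact lt_of_pow_lt_pow_left₀ k (by positivity) h4

end Chain
lemma esymmR_const (c : ℝ) (i : ℕ) :
    esymmR m (fun _ => c) i = (m.choose i : ℝ) * c ^ i := by
  rw [esymmR]
  rw [Finset.sum_congr rfl (fun s hs => ?_)]
  · rw [Finset.sum_const, Finset.card_powersetCard, Finset.card_univ, Fintype.card_fin,
      nsmul_eq_mul]
  · rw [Finset.prod_const, (Finset.mem_powersetCard.mp hs).2]

lemma P_shift (ε : ℝ) :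
    P m (fun i => x i + ε) = (P m x).comp (X + C ε) := by
  rw [P, P, prod_comp]
  refine Finset.prod_congr rfl fun i _ => ?_
  rw [add_comp, X_comp, C_comp, C_add]
  ring

lemma esymmR_shift_pos {K : ℕ} (hK : K ≤ m)
    (hσ : ∀ i, 1 ≤ i → i ≤ K → 0 ≤ esymmR m x i) {ε : ℝ} (hε : 0 < ε)
    {j : ℕ} (hj : 1 ≤ j) (hjK : j ≤ K) :
    0 < esymmR m (fun i => x i + ε) j := by
  have hjm : j ≤ m := hjK.trans hK
  rw [← coeff_P _ _ hjm, P_shift, ← taylor_apply, taylor_coeff]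
  set h := hasseDeriv (m - j) (P m x) with hh
  have hco : ∀ i : ℕ, h.coeff i = ((i + (m - j)).choose (m - j) : ℝ) * (P m x).coeff (i + (m - j)) := by
    intro i
    rw [hh, hasseDeriv_coeff]
  have hterm : ∀ i : ℕ, 0 ≤ h.coeff i * ε ^ i := by
    intro i
    by_cases him : i ≤ j
    · rw [hco i]
      have : (P m x).coeff (i + (m - j)) = esymmR m x (j - i) := by
        rw [show i + (m - j) = m - (j - i) by omega, coeff_P x _ (by omega)]
      rw [this]
      have h1 : 0 ≤ esymmR m x (j - i) := by
        by_cases hij : i = j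
        · subst hij; simp [esymmR_zero]
        · exact hσ (j - i) (by omega) (by omega)
      positivity
    · have : (P m x).coeff (i + (m - j)) = 0 := by
        apply coeff_eq_zero_of_natDegree_lt
        rw [natDegree_P]
        omega
      rw [hco i, this]
      simp
  have hj_le : j ≤ h.natDegree := by
    apply le_natDegree_of_ne_zero
    rw [hco j, show j + (m - j) = m by omega]
    have h1 : (P m x).coeff m = 1 := by
      have := (monic_P x).coeff_natDegree
      rwa [natDegree_P] at this
    rw [h1, mul_one]
    have : 0 < m.choose (m - j) := Nat.choose_pos (by omega)
    positivity
  rw [eval_eq_sum_range]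
  apply Finset.sum_pos' (fun i _ => hterm i)
  refine ⟨j, Finset.mem_range.mpr (by omega), ?_⟩
  rw [hco j, show j + (m - j) = m by omega]
  have h1 : (P m x).coeff m = 1 := by
    have := (monic_P x).coeff_natDegree
    rwa [natDegree_P] at this
  rw [h1, mul_one]
  have : 0 < m.choose (m - j) := Nat.choose_pos (by omega)
  positivity

lemma esymmR_shift_continuous (j : ℕ) :
    Continuous (fun ε : ℝ => esymmR m (fun i => x i + ε) j) := by
  simp only [esymmR]
  exact continuous_finset_sum _ fun s _ =>
    continuous_finset_prod _ fun i _ => by continuity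
lemma perturbed_ineq (l k : ℕ) (hl : 1 ≤ l) (hlk : l < k) (hk : k ≤ m)
    (hσ : ∀ i, 1 ≤ i → i ≤ k → 0 < esymmR m x i) :
    Hnorm m x k ^ l ≤ Hnorm m x l ^ k := by
  by_cases hc : ∀ i i' : Fin m, x i = x i'
  · have hm1 : 1 ≤ m := by omega
    have hcp : (0:ℝ) < (m.choose 1 : ℝ) := by exact_mod_cast Nat.choose_pos (by omega)
    set c := x ⟨0, by omega⟩ with hcdef
    have hx : x = fun _ => c := funext fun i => hc i ⟨0, by omega⟩
    have hc0 : 0 < c := by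
      have h1 := hσ 1 le_rfl (by omega)
      rw [hx, esymmR_const] at h1
      nlinarith
    have hH : ∀ i, i ≤ m → Hnorm m x i = c ^ i := by
      intro i him
      have : (m.choose i : ℝ) ≠ 0 := by
        have := Nat.choose_pos him
        positivity
      rw [hx, Hnorm, esymmR_const, mul_comm, mul_div_assoc, div_self this, mul_one]
    rw [hH k hk, hH l (by omega), ← pow_mul, ← pow_mul, Nat.mul_comm]
  · push_neg at hc
    obtain ⟨i, i', hii⟩ := hc
    exact le_of_lt (chain_cross x hk hσ (P_two_distinct x ⟨i, i', hii⟩) l k hl hlk le_rfl)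

lemma maclaurin_pow (l k : ℕ) (hl : 1 ≤ l) (hlk : l < k) (hk : k ≤ m)
    (hσ : ∀ i, 1 ≤ i → i ≤ k → 0 ≤ esymmR m x i) :
    Hnorm m x k ^ l ≤ Hnorm m x l ^ k := by
  set F : ℝ → ℝ := fun ε =>
    Hnorm m (fun i => x i + ε) l ^ k - Hnorm m (fun i => x i + ε) k ^ l with hF
  have hcont : Continuous F := by
    apply Continuous.sub
    · exact (((esymmR_shift_continuous x l).div_const _).pow k)
    · exact (((esymmR_shift_continuous x k).div_const _).pow l)
  have h0 : ∀ ε ∈ Set.Ioi (0:ℝ), 0 ≤ F ε := by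
    intro ε hε
    have := perturbed_ineq (x := fun i => x i + ε) l k hl hlk hk
      (fun i hi hik => esymmR_shift_pos x hk hσ hε hi hik)
    simp only [hF]
    linarith
  have htend : Filter.Tendsto F (nhdsWithin 0 (Set.Ioi 0)) (nhds (F 0)) :=
    (hcont.tendsto 0).mono_left nhdsWithin_le_nhds
  have h2 : 0 ≤ F 0 := ge_of_tendsto htend (eventually_nhdsWithin_of_forall h0)
  have hx0 : (fun i => x i + (0:ℝ)) = x := funext fun i => add_zero _
  rw [hF] at h2
  simp only [hx0] at h2
  linarith

/-- **Maclaurin inequality.**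
`σ_j(λ) ≥ 0` for `1 ≤ j ≤ k` implies `H_l ≥ H_k^{l/k}`, with equality (under strict
positivity of the `σ_j`'s) iff `λ = c(1,…,1)`, `c > 0`. -/
theorem stmt_1 (n : ℕ) (hn : 3 ≤ n) (l k : ℕ) (hl : 1 ≤ l) (hlk : l < k) (hk : k ≤ n - 1)
    (lam : Fin (n - 1) → ℝ)
    (hσ : ∀ j : ℕ, 1 ≤ j → j ≤ k → 0 ≤ esymmR (n - 1) lam j) :
    Hnorm (n - 1) lam k ^ ((l : ℝ) / (k : ℝ)) ≤ Hnorm (n - 1) lam l ∧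
    ((∀ j : ℕ, 1 ≤ j → j ≤ k → 0 < esymmR (n - 1) lam j) →
      Hnorm (n - 1) lam l = Hnorm (n - 1) lam k ^ ((l : ℝ) / (k : ℝ)) →
      ∃ c : ℝ, 0 < c ∧ lam = fun _ => c) := by
  have hm2 : 2 ≤ n - 1 := by omega
  have hkm : k ≤ n - 1 := hk
  have hknz : (k : ℝ) ≠ 0 := by
    have : 1 ≤ k := by omega
    positivity
  have hHk0 : 0 ≤ Hnorm (n-1) lam k := by
    have h1 := hσ k (by omega) le_rfl
    have h2 : (0:ℝ) ≤ ((n-1).choose k : ℝ) := by positivity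
    exact div_nonneg h1 h2
  have hHl0 : 0 ≤ Hnorm (n-1) lam l := by
    have h1 := hσ l hl (by omega)
    have h2 : (0:ℝ) ≤ ((n-1).choose l : ℝ) := by positivity
    exact div_nonneg h1 h2
  have tkeq : (Hnorm (n-1) lam k ^ ((l : ℝ) / (k : ℝ))) ^ k = Hnorm (n-1) lam k ^ l := by
    rw [← Real.rpow_natCast (Hnorm (n-1) lam k ^ ((l : ℝ) / (k : ℝ))) k,
      ← Real.rpow_mul hHk0, div_mul_cancel₀ _ hknz, Real.rpow_natCast]
  constructor
  · have hp := maclaurin_pow lam l k hl hlk hkm hσ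
    refine le_of_pow_le_pow_left₀ (show k ≠ 0 by omega) hHl0 ?_
    rw [tkeq]
    exact hp
  · intro hσs heq
    by_cases hc : ∀ i i' : Fin (n-1), lam i = lam i'
    · have hcp : (0:ℝ) < ((n-1).choose 1 : ℝ) := by exact_mod_cast Nat.choose_pos (by omega)
      set c := lam ⟨0, by omega⟩ with hcdef
      have hx : lam = fun _ => c := funext fun i => hc i ⟨0, by omega⟩
      have hc0 : 0 < c := by
        have h1 := hσs 1 le_rfl (by omega)
        rw [hx, esymmR_const] at h1
        nlinarith
      exact ⟨c, hc0, hx⟩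
    · exfalso
      push_neg at hc
      obtain ⟨i, i', hii⟩ := hc
      have hstrict := chain_cross lam hkm hσs (P_two_distinct lam ⟨i, i', hii⟩) l k hl hlk le_rfl
      rw [heq] at hstrict
      rw [tkeq] at hstrict
      exact lt_irrefl _ hstrict
end

section
/- Let n ≥ 3 and 1 ≤ i < j ≤ k ≤ n−1 be integers, and let λ ∈ ℝ^{n−1} satisfy σ_m(λ) > 0 for all 1 ≤ m ≤ k. Then for every p ∈ {1, …, n−1}, (j−1)·H_{j−2}(Λ_p)·H_i(λ) > (i−1)·H_j(λ)·H_{i−2}(Λ_p). -/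
set_option maxHeartbeats 1000000

open Multiset Polynomial


namespace NA

lemma esymm_zero (s : Multiset ℝ) : s.esymm 0 = 1 := by
  simp [Multiset.esymm]

lemma esymm_cons (a : ℝ) (s : Multiset ℝ) (m : ℕ) :
    (a ::ₘ s).esymm (m + 1) = s.esymm (m + 1) + a * s.esymm m := by
  rw [Multiset.esymm, Multiset.powersetCard_cons, Multiset.map_add, Multiset.sum_add,
    Multiset.map_map]
  congr 1
  rw [Multiset.esymm, ← Multiset.sum_map_mul_left]
  congr 1
  exact Multiset.map_congr rfl fun t _ => by simp [Function.comp]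

lemma esymm_eq_zero (s : Multiset ℝ) (m : ℕ) (h : Multiset.card s < m) : s.esymm m = 0 := by
  rw [Multiset.esymm, Multiset.powersetCard_eq_empty _ h]
  simp

lemma esymm_card (s : Multiset ℝ) : s.esymm (Multiset.card s) = s.prod := by
  induction s using Multiset.induction with
  | empty => simp [Multiset.esymm]
  | cons a s ih =>
    rw [Multiset.card_cons, esymm_cons, esymm_eq_zero s _ (Nat.lt_succ_self _), ih]
    simp

lemma esymm_one (s : Multiset ℝ) : s.esymm 1 = s.sum := by
  induction s using Multiset.induction with
  | empty => simp [Multiset.esymm, Multiset.powersetCard_zero_right]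
  | cons a s ih => rw [esymm_cons, ih, esymm_zero, Multiset.sum_cons]; ring

lemma sum_sq_identity (s : Multiset ℝ) :
    (s.map (fun x => x ^ 2)).sum = s.sum ^ 2 - 2 * s.esymm 2 := by
  induction s using Multiset.induction with
  | empty => simp [Multiset.esymm, Multiset.powersetCard_zero_right]
  | cons a s ih =>
    rw [Multiset.map_cons, Multiset.sum_cons, ih, Multiset.sum_cons,
      show (2 : ℕ) = 1 + 1 from rfl, esymm_cons, esymm_one]
    ring

lemma cs_ineq (s : Multiset ℝ) :
    s.sum ^ 2 ≤ (Multiset.card s : ℝ) * (s.map (fun x => x ^ 2)).sum := by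
  induction s using Multiset.induction with
  | empty => simp
  | cons a s ih =>
    rw [Multiset.sum_cons, Multiset.map_cons, Multiset.sum_cons, Multiset.card_cons]
    push_cast
    by_cases hc : s = 0
    · subst hc; simp
    · have hc1 : (1 : ℝ) ≤ (Multiset.card s : ℝ) := by
        have : 1 ≤ Multiset.card s := Nat.one_le_iff_ne_zero.mpr (fun h => hc (Multiset.card_eq_zero.mp h))
        exact_mod_cast this
      nlinarith [sq_nonneg ((Multiset.card s : ℝ) * a - s.sum),
        mul_nonneg (by positivity : (0:ℝ) ≤ (Multiset.card s : ℝ) + 1) (sub_nonneg.2 ih),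
        hc1, sub_nonneg.2 ih]

/-- base case of Newton's inequality -/
lemma newton_base (s : Multiset ℝ) :
    2 * (Multiset.card s : ℝ) * s.esymm 2 ≤ ((Multiset.card s : ℝ) - 1) * s.esymm 1 ^ 2 := by
  have h1 := cs_ineq s
  have h2 := sum_sq_identity s
  rw [esymm_one]
  nlinarith [h1, h2]


lemma esymm_inv (s : Multiset ℝ) (h0 : (0:ℝ) ∉ s) :
    ∀ m, m ≤ Multiset.card s →
      (s.map (·⁻¹)).esymm m * s.prod = s.esymm (Multiset.card s - m) := by
  induction s using Multiset.induction with
  | empty =>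
    intro m hm
    simp only [Multiset.card_zero, Nat.le_zero] at hm
    subst hm
    simp [esymm_zero]
  | cons a s ih =>
    have ha : a ≠ 0 := fun h => h0 (by rw [h]; exact Multiset.mem_cons_self _ _)
    have h0s : (0:ℝ) ∉ s := fun h => h0 (Multiset.mem_cons_of_mem h)
    intro m hm
    rw [Multiset.card_cons] at hm
    match m with
    | 0 =>
      simp only [esymm_zero, one_mul, Nat.sub_zero, Multiset.card_cons]
      rw [show Multiset.card s + 1 = Multiset.card (a ::ₘ s) from (Multiset.card_cons a s).symm,
        esymm_card]
    | (m' + 1) =>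
      rw [Multiset.map_cons, esymm_cons, Multiset.prod_cons]
      have hcy : Multiset.card (s.map (·⁻¹)) = Multiset.card s := Multiset.card_map _ _
      rcases Nat.lt_or_ge m' (Multiset.card s) with hlt | hge
      · have e1 := ih h0s (m' + 1) hlt
        have e2 := ih h0s m' (Nat.le_of_lt hlt)
        have hsub : Multiset.card (a ::ₘ s) - (m' + 1) = (Multiset.card s - (m' + 1)) + 1 := by
          rw [Multiset.card_cons]; omega
        rw [hsub, esymm_cons]
        have hsub2 : Multiset.card s - (m' + 1) + 1 = Multiset.card s - m' := by omega
        calc ((s.map (·⁻¹)).esymm (m' + 1) + a⁻¹ * (s.map (·⁻¹)).esymm m') * (a * s.prod)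
            = a * ((s.map (·⁻¹)).esymm (m' + 1) * s.prod)
              + (s.map (·⁻¹)).esymm m' * s.prod := by field_simp
          _ = a * s.esymm (Multiset.card s - (m' + 1)) + s.esymm (Multiset.card s - m') := by
              rw [e1, e2]
          _ = s.esymm (Multiset.card s - (m' + 1) + 1)
              + a * s.esymm (Multiset.card s - (m' + 1)) := by rw [hsub2]; ring
      · have hm' : m' = Multiset.card s := by omega
        subst hm'
        have hz : (s.map (·⁻¹)).esymm (Multiset.card s + 1) = 0 :=
          esymm_eq_zero _ _ (by rw [hcy]; omega)
        have htop : (s.map (·⁻¹)).esymm (Multiset.card s) = s.prod⁻¹ := by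
          rw [← hcy, esymm_card, Multiset.prod_map_inv]
          simp
        have hsub : Multiset.card (a ::ₘ s) - (Multiset.card s + 1) = 0 := by
          rw [Multiset.card_cons]; omega
        rw [hz, htop, hsub, esymm_zero]
        have hps : s.prod ≠ 0 := Multiset.prod_ne_zero h0s
        field_simp
        ring

lemma newton_top (s : Multiset ℝ) (r : ℕ) (hr : 1 ≤ r) (hc : Multiset.card s = r + 1) :
    2 * ((r:ℝ) + 1) * (s.esymm (r-1) * s.esymm (r+1)) ≤ r * s.esymm r ^ 2 := by
  have hpe : s.esymm (r+1) = s.prod := by rw [← hc, esymm_card]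
  by_cases h0 : (0:ℝ) ∈ s
  · have hp : s.esymm (r+1) = 0 := by rw [hpe]; exact Multiset.prod_eq_zero h0
    rw [hp, mul_zero, mul_zero]
    positivity
  · have hprod : s.prod ≠ 0 := Multiset.prod_ne_zero h0
    have h1 := esymm_inv s h0 1 (by omega)
    have h2 := esymm_inv s h0 2 (by omega)
    rw [hc] at h1 h2
    have e1 : s.esymm r = (s.map (·⁻¹)).esymm 1 * s.prod := by
      rw [h1]; congr 1
    have e2 : s.esymm (r-1) = (s.map (·⁻¹)).esymm 2 * s.prod := by
      rw [h2]; congr 1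
    have hcy : (Multiset.card (s.map (·⁻¹)) : ℝ) = (r:ℝ) + 1 := by
      rw [Multiset.card_map, hc]; push_cast; ring
    have base := newton_base (s.map (·⁻¹))
    rw [hcy] at base
    rw [hpe, e1, e2]
    nlinarith [mul_le_mul_of_nonneg_right base (sq_nonneg s.prod)]


lemma deriv_step (s : Multiset ℝ) (hs : 1 ≤ Multiset.card s) :
    ∃ t : Multiset ℝ, Multiset.card t = Multiset.card s - 1 ∧
      ∀ m, m ≤ Multiset.card s - 1 →
        ((Multiset.card s : ℝ) - m) * s.esymm m = (Multiset.card s : ℝ) * t.esymm m := by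
  classical
  set c := Multiset.card s with hcdef
  set P : Polynomial ℝ := (s.map (fun a => Polynomial.X + Polynomial.C a)).prod with hP
  have hmap : s.map (fun a => Polynomial.X + Polynomial.C a)
      = (s.map (fun a => -a)).map (fun a => Polynomial.X - Polynomial.C a) := by
    rw [Multiset.map_map]
    exact Multiset.map_congr rfl fun x _ => by simp [sub_neg_eq_add]
  have hroots : P.roots = s.map (fun a => -a) := by
    rw [hP, hmap, Polynomial.roots_multiset_prod_X_sub_C]
  have hPmonic : P.Monic :=
    Polynomial.monic_multiset_prod_of_monic _ _ fun a _ => Polynomial.monic_X_add_C a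
  have hPdeg : P.natDegree = c := by
    rw [hP, hmap, Polynomial.natDegree_multiset_prod_X_sub_C_eq_card, Multiset.card_map]
  set Q := Polynomial.derivative P with hQ
  have hQtop : Q.coeff (c - 1) = (c : ℝ) := by
    have h1 : c - 1 + 1 = c := by omega
    rw [hQ, Polynomial.coeff_derivative, h1]
    have : P.coeff c = 1 := by
      rw [← hPdeg]; exact hPmonic.coeff_natDegree
    rw [this]
    have : ((c - 1 : ℕ) : ℝ) = (c : ℝ) - 1 := by
      rw [Nat.cast_sub hs]; norm_num
    rw [this]; ring
  have hcne : (c : ℝ) ≠ 0 := by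
    have : 0 < c := hs
    positivity
  have hQne : Q ≠ 0 := by
    intro h
    rw [h] at hQtop
    simp at hQtop
    exact hcne hQtop.symm
  have hQdeg : Q.natDegree = c - 1 := by
    refine le_antisymm ?_ (Polynomial.le_natDegree_of_ne_zero ?_)
    · have := Polynomial.natDegree_derivative_lt (p := P) (by rw [hPdeg]; omega)
      rw [hPdeg, ← hQ] at this
      omega
    · rw [hQtop]; exact hcne
  have hQroots : Multiset.card Q.roots = c - 1 := by
    refine le_antisymm (hQdeg ▸ Q.card_roots') ?_
    have h1 := Polynomial.card_roots_le_derivative P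
    rw [hroots, Multiset.card_map, ← hQ] at h1
    omega
  have hQsplits : Q.Splits :=
    Polynomial.splits_iff_card_roots.mpr (by rw [hQroots, hQdeg])
  have hQeq := hQsplits.eq_prod_roots
  have hQlead : Q.leadingCoeff = (c : ℝ) := by
    rw [Polynomial.leadingCoeff, hQdeg, hQtop]
  refine ⟨Q.roots.map (fun a => -a), by rw [Multiset.card_map, hQroots], fun m hm => ?_⟩
  have htprod : ((Q.roots.map (fun a => -a)).map (fun a => Polynomial.X + Polynomial.C a)).prod
      = (Q.roots.map (fun a => Polynomial.X - Polynomial.C a)).prod := by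
    rw [Multiset.map_map]
    exact congrArg _ (Multiset.map_congr rfl fun x _ => by simp [sub_eq_add_neg])
  have hA : P.coeff (c - m) = s.esymm m := by
    have h := Multiset.prod_X_add_C_coeff s (show c - m ≤ c by omega)
    rw [← hP] at h
    rw [h]
    congr 1
    omega
  have hB : Q.coeff (c - 1 - m) = P.coeff (c - m) * ((c : ℝ) - m) := by
    have h1 : c - 1 - m + 1 = c - m := by omega
    rw [hQ, Polynomial.coeff_derivative, h1]
    congr 1
    have : ((c - 1 - m : ℕ) : ℝ) = (c : ℝ) - 1 - m := by
      rw [Nat.cast_sub (by omega : m ≤ c - 1), Nat.cast_sub hs]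
      norm_num
    rw [this]; ring
  have hC : Q.coeff (c - 1 - m) = (c : ℝ) * (Q.roots.map (fun a => -a)).esymm m := by
    conv_lhs => rw [hQeq]
    rw [Polynomial.coeff_C_mul, hQlead, ← htprod]
    have h := Multiset.prod_X_add_C_coeff (Q.roots.map (fun a => -a))
      (show c - 1 - m ≤ Multiset.card (Q.roots.map (fun a => -a)) by
        rw [Multiset.card_map, hQroots]; omega)
    rw [h, Multiset.card_map, hQroots]
    congr 2
    omega
  rw [← hA, ← hC, hB]; ring


lemma choose_rel (c m : ℕ) (hc : 1 ≤ c) (hm : m ≤ c) :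
    (c : ℝ) * ((c-1).choose m : ℝ) = ((c : ℝ) - m) * (c.choose m : ℝ) := by
  have hnat : c * ((c-1).choose m) = c.choose m * (c - m) := by
    have h1 := Nat.add_one_mul_choose_eq (c-1) m
    have h2 : c - 1 + 1 = c := by omega
    rw [h2] at h1
    rw [h1, Nat.choose_succ_right_eq]
  have := congrArg (fun x : ℕ => (x : ℝ)) hnat
  push_cast [Nat.cast_sub hm] at this
  rw [this]; ring

lemma newtonM (c : ℕ) : ∀ (s : Multiset ℝ), Multiset.card s = c → ∀ r : ℕ, 1 ≤ r →
    s.esymm (r-1) * s.esymm (r+1) * ((c.choose r : ℝ))^2 ≤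
      s.esymm r ^ 2 * (c.choose (r-1) : ℝ) * (c.choose (r+1) : ℝ) := by
  induction c using Nat.strong_induction_on with
  | _ c ih =>
    intro s hc r hr
    rcases lt_trichotomy c (r+1) with h | h | h
    · rw [esymm_eq_zero s (r+1) (by omega : Multiset.card s < r + 1)]
      simp only [mul_zero, zero_mul]
      positivity
    · subst h
      have top := newton_top s r hr hc
      rw [Nat.choose_succ_self_right, Nat.choose_self]
      have hsymm : (r+1).choose (r-1) = (r+1).choose 2 := by
        rw [← Nat.choose_symm (by omega : 2 ≤ r+1)]
        exact congrArg _ (by omega)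
      rw [hsymm, Nat.cast_choose_two]
      push_cast
      nlinarith [top, (show (0:ℝ) ≤ (r:ℝ) + 1 by positivity)]
    · have hc1 : 1 ≤ c := by omega
      obtain ⟨t, hct, hrel⟩ := deriv_step s (by omega)
      rw [hc] at hct hrel
      have iht := ih (c-1) (by omega) t hct r hr
      have hρ1 : ((r-1 : ℕ) : ℝ) = (r : ℝ) - 1 := by
        push_cast [Nat.cast_sub hr]; ring
      have g1 := hrel (r-1) (by omega)
      have g2 := hrel r (by omega)
      have g3 := hrel (r+1) (by omega)
      have ch1 := choose_rel c (r-1) hc1 (by omega)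
      have ch2 := choose_rel c r hc1 (by omega)
      have ch3 := choose_rel c (r+1) hc1 (by omega)
      rw [hρ1] at g1 ch1
      push_cast at g3 ch3
      have hcne : (c : ℝ) ≠ 0 := by positivity
      have p1 : (0:ℝ) < (c : ℝ) - ((r:ℝ) - 1) := by
        have : (r : ℝ) + 1 < c := by exact_mod_cast h
        linarith
      have p2 : (0:ℝ) < (c : ℝ) - (r:ℝ) := by
        have : (r : ℝ) + 1 < c := by exact_mod_cast h
        linarith
      have p3 : (0:ℝ) < (c : ℝ) - ((r:ℝ) + 1) := by
        have : (r : ℝ) + 1 < c := by exact_mod_cast h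
        linarith
      have hF1 : t.esymm (r-1) = ((c:ℝ) - ((r:ℝ)-1)) * s.esymm (r-1) / c := by
        rw [eq_div_iff hcne, mul_comm]; exact g1.symm
      have hF2 : t.esymm r = ((c:ℝ) - (r:ℝ)) * s.esymm r / c := by
        rw [eq_div_iff hcne, mul_comm]; exact g2.symm
      have hF3 : t.esymm (r+1) = ((c:ℝ) - ((r:ℝ)+1)) * s.esymm (r+1) / c := by
        rw [eq_div_iff hcne, mul_comm]; exact g3.symm
      have hA : ((c-1).choose (r-1) : ℝ) = ((c:ℝ) - ((r:ℝ)-1)) * (c.choose (r-1) : ℝ) / c := by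
        rw [← ch1]; field_simp
      have hB : ((c-1).choose r : ℝ) = ((c:ℝ) - (r:ℝ)) * (c.choose r : ℝ) / c := by
        rw [← ch2]; field_simp
      have hD : ((c-1).choose (r+1) : ℝ) = ((c:ℝ) - ((r:ℝ)+1)) * (c.choose (r+1) : ℝ) / c := by
        rw [← ch3]; field_simp
      rw [hF1, hF2, hF3, hA, hB, hD] at iht
      have hKpos : (0:ℝ) < (((c:ℝ) - ((r:ℝ)+1)) * ((c:ℝ) - (r:ℝ))^2 * ((c:ℝ) - ((r:ℝ)-1))) / (c:ℝ)^4 := by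
        positivity
      refine le_of_mul_le_mul_left ?_ hKpos
      calc (((c:ℝ) - ((r:ℝ)+1)) * ((c:ℝ) - (r:ℝ))^2 * ((c:ℝ) - ((r:ℝ)-1))) / (c:ℝ)^4
            * (s.esymm (r-1) * s.esymm (r+1) * ((c.choose r : ℝ))^2)
          = ((c:ℝ) - ((r:ℝ)-1)) * s.esymm (r-1) / c * (((c:ℝ) - ((r:ℝ)+1)) * s.esymm (r+1) / c)
            * (((c:ℝ) - (r:ℝ)) * (c.choose r : ℝ) / c)^2 := by
            field_simp
        _ ≤ (((c:ℝ) - (r:ℝ)) * s.esymm r / c)^2 * (((c:ℝ) - ((r:ℝ)-1)) * (c.choose (r-1) : ℝ) / c)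
            * (((c:ℝ) - ((r:ℝ)+1)) * (c.choose (r+1) : ℝ) / c) := iht
        _ = (((c:ℝ) - ((r:ℝ)+1)) * ((c:ℝ) - (r:ℝ))^2 * ((c:ℝ) - ((r:ℝ)-1))) / (c:ℝ)^4
            * (s.esymm r ^ 2 * (c.choose (r-1) : ℝ) * (c.choose (r+1) : ℝ)) := by
            field_simp


/-- Normalized Newton inequality for arbitrary real multisets. -/
lemma newton_norm (s : Multiset ℝ) (r : ℕ) (hr : 1 ≤ r) :
    (s.esymm (r-1) / ((Multiset.card s).choose (r-1) : ℝ)) *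
      (s.esymm (r+1) / ((Multiset.card s).choose (r+1) : ℝ))
      ≤ (s.esymm r / ((Multiset.card s).choose r : ℝ))^2 := by
  set c := Multiset.card s with hc
  by_cases hle : r + 1 ≤ c
  · have h := newtonM c s hc.symm r hr
    have c1 : (0:ℝ) < (c.choose (r-1) : ℝ) := by
      exact_mod_cast Nat.choose_pos (by omega)
    have c2 : (0:ℝ) < (c.choose r : ℝ) := by
      exact_mod_cast Nat.choose_pos (by omega)
    have c3 : (0:ℝ) < (c.choose (r+1) : ℝ) := by
      exact_mod_cast Nat.choose_pos (by omega)
    rw [div_mul_div_comm, div_pow, div_le_div_iff₀ (by positivity) (by positivity)]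
    nlinarith [h]
  · have hz : s.esymm (r+1) = 0 := esymm_eq_zero _ _ (by omega)
    rw [hz]
    simp only [zero_div, mul_zero]
    positivity

end NA

section Main
open Multiset

/-- deleting coordinate `p` corresponds to removing one element of the multiset of values -/
lemma delete_cons (n : ℕ) (hn : 3 ≤ n) (lam : Fin (n-1) → ℝ) (p : Fin (n-1)) :
    (Finset.univ.val.map lam : Multiset ℝ)
      = lam p ::ₘ (Finset.univ.val.map (deleteCoord lam p)) := by
  have hfin1 : ∀ i : Fin (n-1-1), (i:ℕ) < n-1 := fun i => by have := i.isLt; omega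
  have hfin2 : ∀ i : Fin (n-1-1), (i:ℕ)+1 < n-1 := fun i => by have := i.isLt; omega
  set f : Fin (n-1-1) → Fin (n-1) :=
    fun i => if (i:ℕ) < (p:ℕ) then ⟨i, hfin1 i⟩ else ⟨(i:ℕ)+1, hfin2 i⟩ with hf
  have hcomp : deleteCoord lam p = lam ∘ f := by
    funext i
    simp only [deleteCoord, hf, Function.comp_apply]
    split_ifs <;> rfl
  have hinj : Function.Injective f := by
    intro x y hxy
    have hv : (f x : ℕ) = (f y : ℕ) := congrArg Fin.val hxy
    simp only [hf, apply_ite Fin.val] at hv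
    apply Fin.ext
    split_ifs at hv <;> omega
  have hne : ∀ i, f i ≠ p := by
    intro i he
    have hv : (f i : ℕ) = (p:ℕ) := congrArg Fin.val he
    simp only [hf, apply_ite Fin.val] at hv
    split_ifs at hv <;> omega
  have himg : Finset.image f Finset.univ = Finset.univ.erase p := by
    apply Finset.eq_of_subset_of_card_le
    · intro x hx
      rcases Finset.mem_image.mp hx with ⟨i, -, rfl⟩
      exact Finset.mem_erase.mpr ⟨hne i, Finset.mem_univ _⟩
    · rw [Finset.card_erase_of_mem (Finset.mem_univ p), Finset.card_image_of_injective _ hinj]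
      simp
  have hval : Finset.univ.val.map f = (Finset.univ.erase p).val := by
    rw [← himg, Finset.image_val]
    exact (Multiset.dedup_eq_self.mpr (Multiset.Nodup.map hinj Finset.univ.nodup)).symm
  have h1 : (Finset.univ : Finset (Fin (n-1))).val = p ::ₘ (Finset.univ.erase p).val := by
    rw [Finset.erase_val]
    exact (Multiset.cons_erase (by simp : p ∈ (Finset.univ : Finset (Fin (n-1))).val)).symm
  calc (Finset.univ.val.map lam : Multiset ℝ)
      = (p ::ₘ (Finset.univ.erase p).val).map lam := by rw [← h1]
    _ = lam p ::ₘ ((Finset.univ.erase p).val.map lam) := Multiset.map_cons _ _ _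
    _ = lam p ::ₘ (Finset.univ.val.map (deleteCoord lam p)) := by
        rw [hcomp, ← hval, Multiset.map_map]


/-- If `σ_m(λ) > 0` for `1 ≤ m ≤ k` and `1 ≤ i < j ≤ k`, then for every `p`,
`(j-1) H_{j-2}(Λ_p) H_i(λ) > (i-1) H_j(λ) H_{i-2}(Λ_p)`. -/
theorem stmt_3 (n : ℕ) (hn : 3 ≤ n) (i j k : ℕ) (hi : 1 ≤ i) (hij : i < j) (hjk : j ≤ k)
    (hk : k ≤ n - 1) (lam : Fin (n - 1) → ℝ)
    (hσ : ∀ m : ℕ, 1 ≤ m → m ≤ k → 0 < esymmR (n - 1) lam m) :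
    ∀ p : Fin (n - 1),
      ((i : ℝ) - 1) * Hnorm (n - 1) lam j * Hnorm (n - 2) (deleteCoord lam p) (i - 2) <
        ((j : ℝ) - 1) * Hnorm (n - 2) (deleteCoord lam p) (j - 2) * Hnorm (n - 1) lam i := by
  intro p
  set t : ℝ := lam p with htdef
  set sl : Multiset ℝ := Finset.univ.val.map lam with hsl
  set sm : Multiset ℝ := Finset.univ.val.map (deleteCoord lam p) with hsm
  have hdel : sl = t ::ₘ sm := delete_cons n hn lam p
  have hcl : Multiset.card sl = n - 1 := by rw [hsl]; simp
  have hcm : Multiset.card sm = n - 2 := by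
    have : Multiset.card sl = Multiset.card sm + 1 := by rw [hdel]; simp
    omega
  have hesl : ∀ m, esymmR (n-1) lam m = sl.esymm m :=
    fun m => (Finset.esymm_map_val lam _ m).symm
  have hesm : ∀ m, esymmR (n-2) (deleteCoord lam p) m = sm.esymm m :=
    fun m => (Finset.esymm_map_val _ _ m).symm
  obtain ⟨a, hadef⟩ : ∃ a : ℕ → ℝ, ∀ m, a m = sm.esymm m / ((n-2).choose m : ℝ) :=
    ⟨_, fun _ => rfl⟩
  obtain ⟨b, hbdef⟩ : ∃ b : ℕ → ℝ, ∀ m, b m = sl.esymm m / ((n-1).choose m : ℝ) :=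
    ⟨_, fun _ => rfl⟩
  set Nr : ℝ := ((n - 1 : ℕ) : ℝ) with hNrdef
  have hNrpos : (0:ℝ) < Nr := by
    rw [hNrdef]; exact_mod_cast Nat.lt_of_lt_of_le (by omega) (le_refl (n-1))
  -- positivity of b
  have hbpos : ∀ m, 1 ≤ m → m ≤ k → 0 < b m := by
    intro m h1 h2
    rw [hbdef]
    apply div_pos
    · rw [← hesl]; exact hσ m h1 h2
    · exact_mod_cast Nat.choose_pos (by omega)
  -- Newton's inequality for a
  have hnewt : ∀ r, 1 ≤ r → a (r-1) * a (r+1) ≤ a r ^ 2 := by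
    intro r hr
    have h := NA.newton_norm sm r hr
    rw [hcm] at h
    rw [hadef, hadef, hadef]
    exact h
  -- expansion of b in terms of a
  have hexp : ∀ m, 1 ≤ m → m ≤ n - 1 →
      Nr * b m = (Nr - m) * a m + m * t * a (m-1) := by
    intro m h1 hm
    obtain ⟨m', rfl⟩ : ∃ m', m = m' + 1 := ⟨m-1, by omega⟩
    simp only [Nat.add_sub_cancel]
    have hs : sl.esymm (m'+1) = sm.esymm (m'+1) + t * sm.esymm m' := by
      rw [hdel, NA.esymm_cons]
    have hbC : (0:ℝ) < ((n-1).choose (m'+1) : ℝ) := by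
      exact_mod_cast Nat.choose_pos (by omega)
    have hbm : b (m'+1) * ((n-1).choose (m'+1):ℝ) = sl.esymm (m'+1) := by
      rw [hbdef]; field_simp
    have haM : ∀ r, a r * ((n-2).choose r : ℝ) = sm.esymm r := by
      intro r
      by_cases hr : r ≤ n-2
      · have hC : (0:ℝ) < ((n-2).choose r : ℝ) := by exact_mod_cast Nat.choose_pos hr
        rw [hadef]; field_simp
      · have h0 : sm.esymm r = 0 := NA.esymm_eq_zero _ _ (by rw [hcm]; omega)
        rw [hadef, h0]
        simp
    have id1 : Nr * ((n-2).choose (m'+1) : ℝ)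
        = (Nr - ((m'+1 : ℕ) : ℝ)) * ((n-1).choose (m'+1) : ℝ) := by
      have h := NA.choose_rel (n-1) (m'+1) (by omega) hm
      have he : n - 1 - 1 = n - 2 := by omega
      rw [he] at h
      exact h
    have id2 : Nr * ((n-2).choose m' : ℝ) = ((m'+1:ℕ):ℝ) * ((n-1).choose (m'+1) : ℝ) := by
      have h := Nat.add_one_mul_choose_eq (n-2) m'
      have he : n - 2 + 1 = n - 1 := by omega
      rw [he] at h
      have := congrArg (fun x : ℕ => (x : ℝ)) h
      push_cast at this ⊢
      rw [hNrdef]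
      push_cast
      linarith [this]
    have key : (Nr * b (m'+1)) * ((n-1).choose (m'+1):ℝ)
        = ((Nr - ((m'+1:ℕ):ℝ)) * a (m'+1) + ((m'+1:ℕ):ℝ) * t * a m')
            * ((n-1).choose (m'+1):ℝ) := by
      calc (Nr * b (m'+1)) * ((n-1).choose (m'+1):ℝ)
          = Nr * (b (m'+1) * ((n-1).choose (m'+1):ℝ)) := by ring
        _ = Nr * (sm.esymm (m'+1)) + t * (Nr * sm.esymm m') := by rw [hbm, hs]; ring
        _ = Nr * (a (m'+1) * ((n-2).choose (m'+1):ℝ))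
            + t * (Nr * (a m' * ((n-2).choose m':ℝ))) := by rw [haM, haM]
        _ = a (m'+1) * (Nr * ((n-2).choose (m'+1):ℝ))
            + t * (a m' * (Nr * ((n-2).choose m':ℝ))) := by ring
        _ = a (m'+1) * ((Nr - ((m'+1:ℕ):ℝ)) * ((n-1).choose (m'+1):ℝ))
            + t * (a m' * (((m'+1:ℕ):ℝ) * ((n-1).choose (m'+1):ℝ))) := by rw [id1, id2]
        _ = ((Nr - ((m'+1:ℕ):ℝ)) * a (m'+1) + ((m'+1:ℕ):ℝ) * t * a m')
            * ((n-1).choose (m'+1):ℝ) := by ring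
    exact mul_right_cancel₀ (ne_of_gt hbC) key
  -- positivity of a up to k-1
  have ha0 : a 0 = 1 := by rw [hadef]; simp [NA.esymm_zero]
  have hapos : ∀ m, m ≤ k - 1 → 0 < a m := by
    intro m
    induction m using Nat.strong_induction_on with
    | _ m ih =>
      intro hmk
      match m with
      | 0 => rw [ha0]; norm_num
      | (m' + 1) =>
        by_contra hcon
        push_neg at hcon
        have hprev : 0 < a m' := ih m' (by omega) (by omega)
        have h1 := hexp (m'+1) (by omega) (by omega)
        have h2 := hexp (m'+2) (by omega) (by omega)
        simp only [Nat.add_sub_cancel] at h1 h2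
        have hb1 := hbpos (m'+1) (by omega) (by omega)
        have hb2 := hbpos (m'+2) (by omega) (by omega)
        have hnw := hnewt (m'+1) (by omega)
        simp only [Nat.add_sub_cancel] at hnw
        have X1 : 0 < (Nr - ((m'+1:ℕ):ℝ)) * a (m'+1) + ((m'+1:ℕ):ℝ) * t * a m' := by
          rw [← h1]; exact mul_pos hNrpos hb1
        have X2 : 0 < (Nr - ((m'+2:ℕ):ℝ)) * a (m'+2) + ((m'+2:ℕ):ℝ) * t * a (m'+1) := by
          rw [show m' + 2 - 1 = m' + 1 from by omega] at h2
          rw [← h2]; exact mul_pos hNrpos hb2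
        have hQ : (0:ℝ) ≤ Nr - ((m'+2:ℕ):ℝ) := by
          rw [hNrdef]
          have : m' + 2 ≤ n - 1 := by omega
          have := (Nat.cast_le (α := ℝ)).mpr this
          linarith
        have Y1 : 0 ≤ ((m'+2:ℕ):ℝ) * ((-(a (m'+1))) *
            ((Nr - ((m'+1:ℕ):ℝ)) * a (m'+1) + ((m'+1:ℕ):ℝ) * t * a m')) :=
          mul_nonneg (by positivity) (mul_nonneg (by linarith) X1.le)
        have Y2 : 0 < ((m'+1:ℕ):ℝ) * (a m' *
            ((Nr - ((m'+2:ℕ):ℝ)) * a (m'+2) + ((m'+2:ℕ):ℝ) * t * a (m'+1))) :=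
          mul_pos (by positivity) (mul_pos hprev X2)
        have Y3 : 0 ≤ ((m'+1:ℕ):ℝ) * ((Nr - ((m'+2:ℕ):ℝ)) *
            (a (m'+1)^2 - a m' * a (m'+2))) :=
          mul_nonneg (by positivity) (mul_nonneg hQ (by linarith [hnw]))
        have hsq : 0 ≤ Nr * a (m'+1)^2 := by positivity
        push_cast at Y1 Y2 Y3
        nlinarith [Y1, Y2, Y3, hsq]
  -- the one-step inequality
  have hstep : ∀ m, 2 ≤ m → m ≤ k-1 →
      ((m:ℝ)-1) * a (m-2) * b (m+1) < (m:ℝ) * a (m-1) * b m := by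
    intro m hm2 hmk
    obtain ⟨m', rfl⟩ : ∃ m', m = m' + 2 := ⟨m-2, by omega⟩
    simp only [Nat.add_sub_cancel, show m' + 2 - 1 = m' + 1 from by omega,
      show m' + 2 - 2 = m' from rfl]
    have e1 := hexp (m'+2) (by omega) (by omega)
    have e2 := hexp (m'+3) (by omega) (by omega)
    simp only [show m' + 2 - 1 = m' + 1 from by omega,
      show m' + 3 - 1 = m' + 2 from by omega] at e1 e2
    have hb1 := hbpos (m'+2) (by omega) (by omega)
    have hb2 := hbpos (m'+3) (by omega) (by omega)
    have ha0' := hapos m' (by omega)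
    have ha1 := hapos (m'+1) (by omega)
    have ha2 := hapos (m'+2) (by omega)
    have n1 := hnewt (m'+1) (by omega)
    have n2 := hnewt (m'+2) (by omega)
    simp only [Nat.add_sub_cancel, show m' + 2 - 1 = m' + 1 from by omega,
      show m' + 1 + 1 = m' + 2 from by omega, show m' + 2 + 1 = m' + 3 from by omega] at n1 n2
    -- abbreviations
    set x0 := a m' with hx0
    set x1 := a (m'+1) with hx1
    set x2 := a (m'+2) with hx2
    set x3 := a (m'+3) with hx3
    set mr : ℝ := ((m'+2 : ℕ) : ℝ) with hmr
    have hmrval : mr = (m' : ℝ) + 2 := by rw [hmr]; push_cast; ring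
    have hmrpos : (0:ℝ) < mr := by rw [hmrval]; positivity
    -- B = mr^2 x1^2 - (mr^2-1) x0 x2 ≥ x1^2 > 0
    have hB : 0 < mr^2 * x1^2 - (mr^2 - 1) * (x0 * x2) := by
      have h1 : x0 * x2 ≤ x1^2 := n1
      have h2 : (0:ℝ) ≤ mr^2 - 1 := by rw [hmrval]; nlinarith [Nat.cast_nonneg (α := ℝ) m']
      nlinarith [mul_le_mul_of_nonneg_left h1 h2, sq_nonneg x1, ha1]
    -- bound on t from b(m+1) > 0
    have hX2 : 0 < (Nr - ((m'+3:ℕ):ℝ)) * x3 + ((m'+3:ℕ):ℝ) * t * x2 := by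
      rw [← e2]; exact mul_pos hNrpos hb2
    have hcast3 : ((m'+3:ℕ):ℝ) = mr + 1 := by rw [hmrval]; push_cast; ring
    have hcast2 : ((m'+2:ℕ):ℝ) = mr := hmr.symm
    rw [hcast3] at hX2 e2
    -- Q' = Nr - (mr+1) ≥ 0
    have hQ : (0:ℝ) ≤ Nr - (mr + 1) := by
      rw [hNrdef, hmrval]
      have : m' + 3 ≤ n - 1 := by omega
      have := (Nat.cast_le (α := ℝ)).mpr this
      push_cast at this
      linarith
    -- key quantity Δ = A + t * B where
    --   A = mr(Nr-mr) x1 x2 - (mr-1)(Nr-mr-1) x0 x3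
    --   B = mr^2 x1^2 - (mr^2-1) x0 x2
    have h6 : (-(Nr - (mr+1)) * x3) * (mr^2 * x1^2 - (mr^2 - 1) * (x0 * x2))
        < ((mr+1) * t * x2) * (mr^2 * x1^2 - (mr^2 - 1) * (x0 * x2)) := by
      apply mul_lt_mul_of_pos_right _ hB
      linarith [hX2]
    -- bracket ≥ 0 : (mr+1)(Nr-mr) x2^2 - mr(Nr-mr-1) x1 x3 ≥ 0
    have hbr : 0 ≤ (mr+1) * (Nr-mr) * x2^2 - mr * (Nr-(mr+1)) * (x1 * x3) := by
      have h7 : mr * (Nr-(mr+1)) * (x1 * x3) ≤ mr * (Nr-(mr+1)) * x2^2 :=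
        mul_le_mul_of_nonneg_left n2 (mul_nonneg hmrpos.le hQ)
      have hid : (mr+1) * (Nr-mr) - mr * (Nr-(mr+1)) = Nr := by ring
      have h8 : mr * (Nr-(mr+1)) * x2^2 ≤ (mr+1) * (Nr-mr) * x2^2 := by
        apply mul_le_mul_of_nonneg_right _ (sq_nonneg x2)
        nlinarith [hNrpos, hmrpos]
      linarith
    -- W ≥ 0
    have hW : 0 ≤ (mr+1) * x2 * (mr * (Nr-mr) * (x1*x2) - (mr-1) * (Nr-(mr+1)) * (x0*x3))
        - (Nr-(mr+1)) * x3 * (mr^2 * x1^2 - (mr^2 - 1) * (x0 * x2)) := by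
      have hid : (mr+1) * x2 * (mr * (Nr-mr) * (x1*x2) - (mr-1) * (Nr-(mr+1)) * (x0*x3))
          - (Nr-(mr+1)) * x3 * (mr^2 * x1^2 - (mr^2 - 1) * (x0 * x2))
          = mr * x1 * ((mr+1) * (Nr-mr) * x2^2 - mr * (Nr-(mr+1)) * (x1 * x3)) := by
        ring
      rw [hid]
      exact mul_nonneg (mul_nonneg hmrpos.le ha1.le) hbr
    -- combine : 0 < (mr+1) x2 (A + t B)
    have hpos : 0 < (mr+1) * x2 *
        ((mr * (Nr-mr) * (x1*x2) - (mr-1) * (Nr-(mr+1)) * (x0*x3))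
          + t * (mr^2 * x1^2 - (mr^2 - 1) * (x0 * x2))) := by
      nlinarith [h6, hW]
    have hAB : 0 < (mr * (Nr-mr) * (x1*x2) - (mr-1) * (Nr-(mr+1)) * (x0*x3))
          + t * (mr^2 * x1^2 - (mr^2 - 1) * (x0 * x2)) := by
      have hp : (0:ℝ) < (mr+1) * x2 := by positivity
      by_contra hc
      push_neg at hc
      nlinarith [hpos, mul_nonpos_of_nonneg_of_nonpos hp.le hc]
    -- Δ' = mr x1 (Nr b(m'+2)) - (mr-1) x0 (Nr b(m'+3)) = A + t B > 0
    have hdelta : 0 < Nr * ((mr * x1 * b (m'+2)) - ((mr-1) * x0 * b (m'+3))) := by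
      have hid : Nr * ((mr * x1 * b (m'+2)) - ((mr-1) * x0 * b (m'+3)))
          = mr * x1 * (Nr * b (m'+2)) - (mr-1) * x0 * (Nr * b (m'+3)) := by ring
      rw [hid, e1, e2]
      calc (0:ℝ) < (mr * (Nr-mr) * (x1*x2) - (mr-1) * (Nr-(mr+1)) * (x0*x3))
          + t * (mr^2 * x1^2 - (mr^2 - 1) * (x0 * x2)) := hAB
        _ = mr * x1 * ((Nr - mr) * x2 + mr * t * x1)
            - (mr-1) * x0 * ((Nr - (mr+1)) * x3 + (mr+1) * t * x2) := by ring
    have hfinal : 0 < (mr * x1 * b (m'+2)) - ((mr-1) * x0 * b (m'+3)) := by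
      by_contra hc
      push_neg at hc
      nlinarith [hdelta, mul_nonpos_of_nonneg_of_nonpos hNrpos.le hc]
    have h321 : m' + 2 + 1 = m' + 3 := rfl
    rw [h321]
    linarith [hfinal]
  -- the chain
  have hchain : ∀ j', i + 1 ≤ j' → j' ≤ k →
      ((i:ℝ)-1) * a (i-2) * b j' < ((j':ℝ)-1) * a (j'-2) * b i := by
    intro j' hj1
    induction j', hj1 using Nat.le_induction with
    | base =>
      intro hj2
      push_cast
      rcases Nat.lt_or_ge i 2 with hi2 | hi2
      · -- i = 1
        have hi1 : i = 1 := by omega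
        subst hi1
        norm_num
        have hb1 := hbpos 1 (by omega) (by omega)
        rw [ha0]
        linarith [hb1]
      · have h := hstep i hi2 (by omega)
        linarith [h]
    | succ j' hj' ihj =>
      intro hj2
      have hT := ihj (by omega)
      have hF := hstep j' (by omega) (by omega)
      have hbi := hbpos i (by omega) (by omega)
      have hbj := hbpos j' (by omega) (by omega)
      have hbj1 := hbpos (j'+1) (by omega) (by omega)
      have u1 := mul_lt_mul_of_pos_right hT hbj1
      have u2 := mul_lt_mul_of_pos_right hF hbi
      have hc1 : ((j'+1:ℕ):ℝ) - 1 = (j':ℝ) := by push_cast; ring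
      have hc2 : j' + 1 - 2 = j' - 1 := by omega
      rw [hc1, hc2]
      refine lt_of_mul_lt_mul_left (a := b j') ?_ hbj.le
      nlinarith [u1, u2]
  -- conclude
  have hHb : ∀ m, Hnorm (n-1) lam m = b m := by
    intro m
    rw [hbdef m, Hnorm, hesl m]
  have hHa : ∀ m, Hnorm (n-2) (deleteCoord lam p) m = a m := by
    intro m
    rw [hadef m, Hnorm, hesm m]
  rw [hHb, hHb, hHa, hHa]
  have := hchain j (by omega) hjk
  linarith [this]
end Main
end

section
/- Let n ≥ 3 and 2 ≤ l < k ≤ n−1 be integers, and let λ ∈ ℝ^{n−1} satisfy σ_m(λ) ≥ 0 for all 1 ≤ m ≤ k. Let a_1, …, a_{l−1} and b_l, …, b_k be nonnegative real numbers such that Σ_{i=1}^{l−1} a_i H_i(λ) = Σ_{j=l}^{k} b_j H_j(λ) > 0. Then Σ_{j=l}^{k} b_j H_{j−1}(λ) ≥ Σ_{i=1}^{l−1} a_i H_{i−1}(λ). -/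
section NewtonAux

open Multiset Polynomial

lemma my_esymm_zero (s : Multiset ℝ) : s.esymm 0 = 1 := by
  simp [Multiset.esymm, Multiset.powersetCard_zero_left]

lemma my_esymm_of_lt {s : Multiset ℝ} {k : ℕ} (h : Multiset.card s < k) : s.esymm k = 0 := by
  simp [Multiset.esymm, Multiset.powersetCard_eq_empty _ h]

lemma my_esymm_cons (a : ℝ) (s : Multiset ℝ) (k : ℕ) :
    (a ::ₘ s).esymm (k + 1) = s.esymm (k + 1) + a * s.esymm k := by
  simp only [Multiset.esymm, Multiset.powersetCard_cons, Multiset.map_add, Multiset.sum_add,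
    Multiset.map_map]
  congr 1
  rw [← Multiset.sum_map_mul_left]
  congr 1
  apply Multiset.map_congr rfl
  intro t _
  simp [Function.comp, Multiset.prod_cons]

lemma my_esymm_one (s : Multiset ℝ) : s.esymm 1 = s.sum := by
  induction s using Multiset.induction with
  | empty => simp [my_esymm_of_lt (s := (0 : Multiset ℝ)) (k := 1) (by simp)]
  | cons a s ih =>
      rw [show (1:ℕ) = 0 + 1 from rfl, my_esymm_cons, my_esymm_zero]
      simp [ih, add_comm]

lemma my_esymm_top (s : Multiset ℝ) : s.esymm (Multiset.card s) = s.prod := by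
  induction s using Multiset.induction with
  | empty => simp [my_esymm_zero]
  | cons a s ih =>
      rw [Multiset.card_cons, my_esymm_cons, my_esymm_of_lt (by omega), ih]
      simp [Multiset.prod_cons]

lemma my_sq_sum (s : Multiset ℝ) :
    s.sum ^ 2 = (s.map (fun x => x ^ 2)).sum + 2 * s.esymm 2 := by
  induction s using Multiset.induction with
  | empty => simp [my_esymm_of_lt (s := (0 : Multiset ℝ)) (k := 2) (by simp)]
  | cons a s ih =>
      have hc := my_esymm_cons a s 1
      rw [my_esymm_one] at hc
      rw [Multiset.sum_cons, Multiset.map_cons, Multiset.sum_cons, hc]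
      nlinarith [ih]

lemma my_esymm_inv : ∀ (s : Multiset ℝ), (0:ℝ) ∉ s → ∀ r, r ≤ Multiset.card s →
    (s.map (fun x => x⁻¹)).esymm r * s.prod = s.esymm (Multiset.card s - r) := by
  intro s
  induction s using Multiset.induction with
  | empty =>
      intro _ r hr
      simp only [Multiset.card_zero, Nat.le_zero] at hr
      subst hr
      simp [my_esymm_zero]
  | cons a s ih =>
      intro h0 r hr
      have ha : a ≠ 0 := by rintro rfl; exact h0 (Multiset.mem_cons_self _ _)
      have h0s : (0:ℝ) ∉ s := fun h => h0 (Multiset.mem_cons_of_mem h)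
      rcases r with _ | r
      · simp only [my_esymm_zero, one_mul, Nat.sub_zero]
        rw [my_esymm_top]
      · rw [Multiset.card_cons] at hr ⊢
        rw [Multiset.map_cons, my_esymm_cons, Multiset.prod_cons]
        have hr' : r ≤ Multiset.card s := by omega
        have h1 := ih h0s r hr'
        rcases Nat.lt_or_ge r (Multiset.card s) with hlt | hge
        · have h2 := ih h0s (r+1) hlt
          have hnr : Multiset.card s + 1 - (r+1) = (Multiset.card s - (r+1)) + 1 := by omega
          have hnr2 : Multiset.card s - r = Multiset.card s - (r+1) + 1 := by omega
          rw [hnr, my_esymm_cons, ← h2, ← hnr2, ← h1]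
          field_simp
          ring
        · have hreq : r = Multiset.card s := by omega
          subst hreq
          have hz : (Multiset.map (fun x => x⁻¹) s).esymm (Multiset.card s + 1) = 0 :=
            my_esymm_of_lt (by rw [Multiset.card_map]; omega)
          rw [hz]
          have h3 : Multiset.card s + 1 - (Multiset.card s + 1) = 0 := by omega
          rw [h3, my_esymm_zero]
          rw [Nat.sub_self, my_esymm_zero] at h1
          calc (0 + a⁻¹ * (Multiset.map (fun x => x⁻¹) s).esymm (Multiset.card s)) * (a * s.prod)
              = (a⁻¹ * a) * ((Multiset.map (fun x => x⁻¹) s).esymm (Multiset.card s) * s.prod) := by ring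
            _ = 1 := by rw [inv_mul_cancel₀ ha, h1, one_mul]

lemma deriv_step (s : Multiset ℝ) (hs : 0 < Multiset.card s) :
    ∃ t : Multiset ℝ, Multiset.card t = Multiset.card s - 1 ∧
      ∀ j, j + 1 ≤ Multiset.card s →
        (Multiset.card s : ℝ) * t.esymm j = ((Multiset.card s - j : ℕ) : ℝ) * s.esymm j := by
  classical
  set n := Multiset.card s with hn
  set p : ℝ[X] := (s.map fun a => X - C a).prod with hp
  have hmonic : p.Monic := monic_multiset_prod_of_monic _ _ (fun a _ => monic_X_sub_C a)
  have hpdeg : p.natDegree = n := natDegree_multiset_prod_X_sub_C_eq_card s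
  have hproots : p.roots = s := roots_multiset_prod_X_sub_C s
  set q : ℝ[X] := derivative p with hq
  have hqc : q.coeff (n - 1) = (n : ℝ) := by
    rw [hq, coeff_derivative]
    have h1 : n - 1 + 1 = n := by omega
    rw [h1, ← hpdeg, hmonic.coeff_natDegree, hpdeg, one_mul]
    norm_cast
  have hqne : q.coeff (n - 1) ≠ 0 := by
    rw [hqc]; exact Nat.cast_ne_zero.mpr (show n ≠ 0 by omega)
  have hqdeg : q.natDegree = n - 1 := by
    refine le_antisymm ?_ (le_natDegree_of_ne_zero hqne)
    calc q.natDegree ≤ p.natDegree - 1 := natDegree_derivative_le p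
      _ = n - 1 := by rw [hpdeg]
  have hqroots : Multiset.card q.roots = q.natDegree := by
    refine le_antisymm (card_roots' q) ?_
    have h1 := card_roots_le_derivative p
    rw [hproots, ← hq] at h1
    rw [hqdeg]
    omega
  have hqlead : q.leadingCoeff = (n : ℝ) := by
    rw [← coeff_natDegree, hqdeg, hqc]
  refine ⟨q.roots, by rw [hqroots, hqdeg], ?_⟩
  intro j hj
  have hk : n - 1 - j ≤ q.natDegree := by rw [hqdeg]; omega
  have h1 := Polynomial.coeff_eq_esymm_roots_of_card hqroots hk
  rw [hqlead, hqdeg] at h1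
  have he1 : n - 1 - (n - 1 - j) = j := by omega
  rw [he1] at h1
  have h2 : q.coeff (n - 1 - j) = p.coeff (n - j) * ((n - j : ℕ) : ℝ) := by
    rw [hq, coeff_derivative]
    have h3 : n - 1 - j + 1 = n - j := by omega
    have h3' : ((n-1-j:ℕ):ℝ) + 1 = ((n-j:ℕ):ℝ) := by exact_mod_cast congrArg (Nat.cast : ℕ → ℝ) h3
    rw [h3, h3']
  have h4 : p.coeff (n - j) = (-1 : ℝ)^j * s.esymm j := by
    have h5 := Multiset.prod_X_sub_C_coeff s (show n - j ≤ Multiset.card s by omega)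
    have h6 : Multiset.card s - (n - j) = j := by omega
    rw [h6] at h5
    exact h5
  have key : ((-1 : ℝ)^j) * ((n : ℝ) * q.roots.esymm j) =
      ((-1 : ℝ)^j) * (((n - j : ℕ) : ℝ) * s.esymm j) := by
    linear_combination h2 - h1 + ((n - j : ℕ) : ℝ) * h4
  exact mul_left_cancel₀ (pow_ne_zero _ (by norm_num)) key

noncomputable def Hm (s : Multiset ℝ) (k : ℕ) : ℝ :=
  s.esymm k / ((Multiset.card s).choose k : ℝ)

lemma Hm_zero (s : Multiset ℝ) : Hm s 0 = 1 := by
  simp [Hm, my_esymm_zero]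

lemma Hm_of_lt {s : Multiset ℝ} {k : ℕ} (h : Multiset.card s < k) : Hm s k = 0 := by
  simp [Hm, my_esymm_of_lt h]

lemma Hm_top (s : Multiset ℝ) : Hm s (Multiset.card s) = s.prod := by
  simp [Hm, my_esymm_top, Nat.choose_self]

lemma deriv_step_H (s : Multiset ℝ) (hs : 0 < Multiset.card s) :
    ∃ t : Multiset ℝ, Multiset.card t = Multiset.card s - 1 ∧
      ∀ j, j ≤ Multiset.card s - 1 → Hm t j = Hm s j := by
  obtain ⟨t, hct, hkey⟩ := deriv_step s hs
  refine ⟨t, hct, ?_⟩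
  intro j hj
  set n := Multiset.card s with hn
  have hkey' := hkey j (by omega)
  have hbin : (n - j) * n.choose j = n * (n-1).choose j := by
    have h1 : n * (n-1).choose j = n.choose (j+1) * (j+1) := by
      have h := Nat.add_one_mul_choose_eq (n-1) j
      have hsucc : n - 1 + 1 = n := by omega
      rw [hsucc] at h
      exact h
    have h2 := Nat.choose_succ_right_eq n j
    rw [h1, h2, Nat.mul_comm]
  have hc1 : ((n-1).choose j : ℝ) ≠ 0 := by
    exact Nat.cast_ne_zero.mpr (Nat.choose_pos (by omega)).ne'
  have hc2 : (n.choose j : ℝ) ≠ 0 := by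
    exact Nat.cast_ne_zero.mpr (Nat.choose_pos (by omega)).ne'
  have hnne : (n : ℝ) ≠ 0 := Nat.cast_ne_zero.mpr (by omega)
  rw [Hm, Hm, hct, ← hn]
  rw [div_eq_div_iff hc1 hc2]
  have hbinR : ((n - j : ℕ) : ℝ) * (n.choose j : ℝ) = (n : ℝ) * ((n-1).choose j : ℝ) := by
    exact_mod_cast congrArg (Nat.cast : ℕ → ℝ) hbin
  apply mul_left_cancel₀ hnne
  calc (n : ℝ) * (t.esymm j * (n.choose j : ℝ))
      = ((n : ℝ) * t.esymm j) * (n.choose j : ℝ) := by ring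
    _ = (((n - j : ℕ) : ℝ) * s.esymm j) * (n.choose j : ℝ) := by rw [hkey']
    _ = (((n - j : ℕ) : ℝ) * (n.choose j : ℝ)) * s.esymm j := by ring
    _ = ((n : ℝ) * ((n-1).choose j : ℝ)) * s.esymm j := by rw [hbinR]
    _ = (n : ℝ) * (s.esymm j * ((n-1).choose j : ℝ)) := by ring

lemma newton_two (s : Multiset ℝ) (h2 : Multiset.card s = 2) :
    Hm s 0 * Hm s 2 ≤ Hm s 1 ^ 2 := by
  obtain ⟨a, b, rfl⟩ := Multiset.card_eq_two.mp h2
  have e1 : ({a, b} : Multiset ℝ).esymm 1 = a + b := by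
    rw [my_esymm_one]; simp
  have e2 : ({a, b} : Multiset ℝ).esymm 2 = a * b := by
    have := my_esymm_top ({a, b} : Multiset ℝ)
    rw [h2] at this
    rw [this]; simp
  rw [Hm_zero, Hm, Hm, h2, e1, e2]
  norm_num
  nlinarith [sq_nonneg (a - b)]

lemma newton_m1 : ∀ N : ℕ, ∀ s : Multiset ℝ, 2 ≤ N → Multiset.card s = N →
    Hm s 0 * Hm s 2 ≤ Hm s 1 ^ 2 := by
  intro N
  induction N using Nat.strong_induction_on with
  | _ N ih =>
    intro s hN hcard
    rcases eq_or_lt_of_le hN with h | h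
    · exact newton_two s (by omega)
    · obtain ⟨t, hct, hH⟩ := deriv_step_H s (by omega)
      rw [← hH 0 (by omega), ← hH 1 (by omega), ← hH 2 (by omega)]
      exact ih (N-1) (by omega) t (by omega) (by omega)

lemma Hm_inv_rel (s : Multiset ℝ) (h0 : (0:ℝ) ∉ s) (r : ℕ) (hr : r ≤ Multiset.card s) :
    Hm (s.map (fun x => x⁻¹)) r * s.prod = Hm s (Multiset.card s - r) := by
  rw [Hm, Hm, Multiset.card_map, Nat.choose_symm hr, div_mul_eq_mul_div,
    my_esymm_inv s h0 r hr]

lemma newton_top (s : Multiset ℝ) (m : ℕ) (hm : 1 ≤ m) (hcard : Multiset.card s = m + 1) :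
    Hm s (m-1) * Hm s (m+1) ≤ Hm s m ^ 2 := by
  have htop : Hm s (m+1) = s.prod := by
    rw [show m + 1 = Multiset.card s by omega, Hm_top]
  by_cases hp : s.prod = 0
  · rw [htop, hp, mul_zero]; exact sq_nonneg _
  · have h0 : (0:ℝ) ∉ s := fun h => hp (Multiset.prod_eq_zero h)
    have hy2 := Hm_inv_rel s h0 2 (by omega)
    have hy1 := Hm_inv_rel s h0 1 (by omega)
    rw [hcard, show m + 1 - 2 = m - 1 by omega] at hy2
    rw [hcard, show m + 1 - 1 = m by omega] at hy1
    have hnewton := newton_m1 (m+1) (s.map (fun x => x⁻¹)) (by omega)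
      (by rw [Multiset.card_map, hcard])
    rw [Hm_zero, one_mul] at hnewton
    rw [htop, ← hy2, ← hy1]
    nlinarith [sq_nonneg s.prod, sq_nonneg (Hm (s.map (fun x => x⁻¹)) 1)]

lemma newton_all (s : Multiset ℝ) (m : ℕ) (hm : 1 ≤ m) :
    Hm s (m-1) * Hm s (m+1) ≤ Hm s m ^ 2 := by
  rcases lt_or_ge (Multiset.card s) (m+1) with h | h
  · rw [Hm_of_lt h, mul_zero]; exact sq_nonneg _
  · obtain ⟨d, hd⟩ : ∃ d, Multiset.card s = m + 1 + d := ⟨Multiset.card s - (m+1), by omega⟩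
    clear h
    induction d generalizing s with
    | zero => exact newton_top s m hm (by omega)
    | succ d ih =>
        obtain ⟨t, hct, hH⟩ := deriv_step_H s (by omega)
        rw [← hH (m-1) (by omega), ← hH m (by omega), ← hH (m+1) (by omega)]
        exact ih t (by omega)

lemma consec_aux : ∀ d : ℕ, ∀ s : Multiset ℝ, ∀ j : ℕ, 1 ≤ j →
    Multiset.card s = j + 2 + d → Hm s j = 0 → Hm s (j+1) = 0 → Hm s (j+2) = 0 := by
  intro d
  induction d with
  | zero =>
    intro s j hj hcard h1 h2
    by_contra hne
    have htop : Hm s (j+2) = s.prod := by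
      rw [show j + 2 = Multiset.card s by omega, Hm_top]
    have hp : s.prod ≠ 0 := fun h => hne (by rw [htop, h])
    have h0 : (0:ℝ) ∉ s := fun h => hp (Multiset.prod_eq_zero h)
    set y := s.map (fun x => x⁻¹) with hy
    have hy1 := Hm_inv_rel s h0 1 (by omega)
    have hy2 := Hm_inv_rel s h0 2 (by omega)
    rw [hcard, show j + 2 + 0 - 1 = j + 1 by omega] at hy1
    rw [hcard, show j + 2 + 0 - 2 = j by omega] at hy2
    rw [h2] at hy1
    rw [h1] at hy2
    have hcy : Multiset.card y = j + 2 := by rw [hy, Multiset.card_map]; omega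
    have hHy1 : Hm y 1 = 0 := by
      rcases mul_eq_zero.mp hy1 with h | h
      · exact h
      · exact absurd h hp
    have hHy2 : Hm y 2 = 0 := by
      rcases mul_eq_zero.mp hy2 with h | h
      · exact h
      · exact absurd h hp
    have he1 : y.esymm 1 = 0 := by
      rw [Hm, hcy] at hHy1
      have : ((j+2).choose 1 : ℝ) ≠ 0 := Nat.cast_ne_zero.mpr (Nat.choose_pos (by omega)).ne'
      exact (div_eq_zero_iff.mp hHy1).resolve_right this
    have he2 : y.esymm 2 = 0 := by
      rw [Hm, hcy] at hHy2
      have : ((j+2).choose 2 : ℝ) ≠ 0 := Nat.cast_ne_zero.mpr (Nat.choose_pos (by omega)).ne'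
      exact (div_eq_zero_iff.mp hHy2).resolve_right this
    have hsum : y.sum = 0 := by rw [← my_esymm_one]; exact he1
    have hsq := my_sq_sum y
    rw [hsum, he2] at hsq
    have hsq0 : (y.map (fun x => x ^ 2)).sum = 0 := by linarith [hsq]
    have hsne : s ≠ 0 := by
      intro h; rw [h] at hcard; simp at hcard
    obtain ⟨a, ha⟩ := Multiset.exists_mem_of_ne_zero hsne
    have hane : a ≠ 0 := fun h => h0 (h ▸ ha)
    have hmem : a⁻¹ ^ 2 ∈ y.map (fun x => x ^ 2) :=
      Multiset.mem_map_of_mem _ (Multiset.mem_map_of_mem _ ha)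
    have hle := Multiset.single_le_sum (fun x hx => by
      obtain ⟨z, _, rfl⟩ := Multiset.mem_map.mp hx
      positivity) _ hmem
    rw [hsq0] at hle
    have : (0:ℝ) < a⁻¹ ^ 2 := by positivity
    linarith
  | succ d ih =>
    intro s j hj hcard h1 h2
    obtain ⟨t, hct, hH⟩ := deriv_step_H s (by omega)
    have := ih t j hj (by omega) (by rw [hH j (by omega)]; exact h1)
      (by rw [hH (j+1) (by omega)]; exact h2)
    rw [← hH (j+2) (by omega)]
    exact this

lemma consec (s : Multiset ℝ) (j : ℕ) (hj : 1 ≤ j) (h1 : Hm s j = 0) (h2 : Hm s (j+1) = 0) :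
    Hm s (j+2) = 0 := by
  rcases lt_or_ge (Multiset.card s) (j+2) with h | h
  · exact Hm_of_lt h
  · exact consec_aux (Multiset.card s - (j+2)) s j hj (by omega) h1 h2

lemma seq_key (s : Multiset ℝ) (K : ℕ) (hnn : ∀ r, r ≤ K → 0 ≤ Hm s r) :
    ∀ t i : ℕ, 1 ≤ i → i + t ≤ K → Hm s (i-1) * Hm s (i+t) ≤ Hm s i * Hm s (i+t-1) := by
  intro t
  induction t with
  | zero =>
    intro i hi hik
    simp only [Nat.add_zero]
    rw [mul_comm]
  | succ t ih =>
    intro i hi hik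
    rw [show i + (t+1) = (i+t) + 1 by omega, show (i+t) + 1 - 1 = i + t by omega]
    have hnewton := newton_all s (i+t) (by omega)
    by_cases hz : Hm s (i+t) = 0
    · have heq0 : Hm s (i+t-1) * Hm s (i+t+1) = 0 := by
        have hge : 0 ≤ Hm s (i+t-1) * Hm s (i+t+1) :=
          mul_nonneg (hnn _ (by omega)) (hnn _ (by omega))
        have hle : Hm s (i+t-1) * Hm s (i+t+1) ≤ 0 := by nlinarith [hnewton, hz]
        linarith
      have hz1 : Hm s (i+t+1) = 0 := by
        rcases mul_eq_zero.mp heq0 with h | h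
        · by_cases h1it : i + t = 1
          · rw [h1it] at h
            rw [show (1:ℕ) - 1 = 0 by omega, Hm_zero] at h
            norm_num at h
          · have := consec s (i+t-1) (by omega) h
              (by rw [show i+t-1+1 = i+t by omega]; exact hz)
            rw [show i+t-1+2 = i+t+1 by omega] at this
            exact this
        · exact h
      rw [hz1, mul_zero]
      exact mul_nonneg (hnn _ (by omega)) (hnn _ (by omega))
    · have hpos : 0 < Hm s (i+t) := lt_of_le_of_ne (hnn _ (by omega)) (Ne.symm hz)
      have hIH := ih i hi (by omega)
      have hA := hnn (i-1) (by omega)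
      have hE := hnn (i+t+1) (by omega)
      have hB := hnn i (by omega)
      have hC := hnn (i+t-1) (by omega)
      nlinarith [mul_le_mul_of_nonneg_left hIH hE, mul_le_mul_of_nonneg_left hnewton hB,
        hpos, mul_pos hpos hpos]

lemma Hnorm_eq_Hm (m : ℕ) (x : Fin m → ℝ) (r : ℕ) :
    Hnorm m x r = Hm (Multiset.map x Finset.univ.val) r := by
  rw [Hnorm, Hm]
  have h1 : (Multiset.map x Finset.univ.val).esymm r = esymmR m x r :=
    Finset.esymm_map_val x Finset.univ r
  have h2 : Multiset.card (Multiset.map x Finset.univ.val) = m := by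
    simp [Finset.card_univ]
  rw [h1, h2]

end NewtonAux

/-- If `σ_m(λ) ≥ 0` for `1 ≤ m ≤ k`, and nonnegative constants satisfy
`Σ_{i=1}^{l-1} a_i H_i = Σ_{j=l}^{k} b_j H_j > 0`, then
`Σ_{j=l}^{k} b_j H_{j-1} ≥ Σ_{i=1}^{l-1} a_i H_{i-1}`. -/
theorem stmt_4 (n : ℕ) (hn : 3 ≤ n) (l k : ℕ) (hl : 2 ≤ l) (hlk : l < k) (hk : k ≤ n - 1)
    (lam : Fin (n - 1) → ℝ)
    (hσ : ∀ m : ℕ, 1 ≤ m → m ≤ k → 0 ≤ esymmR (n - 1) lam m)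
    (a b : ℕ → ℝ)
    (ha : ∀ i ∈ Finset.Icc 1 (l - 1), 0 ≤ a i)
    (hb : ∀ j ∈ Finset.Icc l k, 0 ≤ b j)
    (heq : ∑ i ∈ Finset.Icc 1 (l - 1), a i * Hnorm (n - 1) lam i =
           ∑ j ∈ Finset.Icc l k, b j * Hnorm (n - 1) lam j)
    (hpos : 0 < ∑ j ∈ Finset.Icc l k, b j * Hnorm (n - 1) lam j) :
    ∑ i ∈ Finset.Icc 1 (l - 1), a i * Hnorm (n - 1) lam (i - 1) ≤
      ∑ j ∈ Finset.Icc l k, b j * Hnorm (n - 1) lam (j - 1) := by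
  set s₀ := Multiset.map lam (Finset.univ.val) with hs₀
  have hH : ∀ r, Hnorm (n-1) lam r = Hm s₀ r := fun r => Hnorm_eq_Hm _ _ r
  have hnn : ∀ r, r ≤ k → 0 ≤ Hm s₀ r := by
    intro r hr
    rcases Nat.eq_zero_or_pos r with rfl | hr1
    · rw [Hm_zero]; norm_num
    · rw [← hH r, Hnorm]
      exact div_nonneg (hσ r hr1 hr) (Nat.cast_nonneg _)
  have pair : ∀ i j : ℕ, 1 ≤ i → i ≤ j → j ≤ k →
      Hm s₀ (i-1) * Hm s₀ j ≤ Hm s₀ i * Hm s₀ (j-1) := by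
    intro i j hi hij hjk
    have := seq_key s₀ k hnn (j - i) i hi (by omega)
    rw [show i + (j - i) = j by omega] at this
    exact this
  have key : (∑ i ∈ Finset.Icc 1 (l-1), a i * Hnorm (n-1) lam (i-1)) *
      (∑ j ∈ Finset.Icc l k, b j * Hnorm (n-1) lam j) ≤
      (∑ i ∈ Finset.Icc 1 (l-1), a i * Hnorm (n-1) lam i) *
      (∑ j ∈ Finset.Icc l k, b j * Hnorm (n-1) lam (j-1)) := by
    rw [Finset.sum_mul_sum, Finset.sum_mul_sum]
    apply Finset.sum_le_sum
    intro i hi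
    apply Finset.sum_le_sum
    intro j hj
    have hi' := Finset.mem_Icc.mp hi
    have hj' := Finset.mem_Icc.mp hj
    have hp := pair i j (by omega) (by omega) (by omega)
    simp only [hH]
    have hab : 0 ≤ a i * b j := mul_nonneg (ha i hi) (hb j hj)
    have h2 := mul_le_mul_of_nonneg_left hp hab
    linarith [h2]
  rw [heq] at key
  exact le_of_mul_le_mul_right (by linarith [key]) hpos
end
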